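/- arXiv:1702.04313 — 7 statements merged into one kernel-verified Lean document; each statement's English description precedes it below -/
import Mathlib

section
/- For every ε with 0 < ε < 1 there exists a natural number N such that the following holds. Let A and B be disjoint finite sets with |A| = a ≥ N and |B| = b ≥ N, and let D be a demand graph on (A, B). If every vertex x ∈ A has degree at most (1 − ε)·b/4 in D and every vertex y ∈ B has degree at most (1 − ε)·a/4 in D, then D is resolvable in the complete bipartite graph K_{A,B}. -/
variable {V : Type*}

/-- A demand graph `D` (a finite multiset of demand edges) is resolvable in the
simple graph `G` if to each demand edge one can assign a path of `G` joining its
two endpoints so that the assigned paths are pairwise edge-disjoint. -/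
def IsResolvable (G : SimpleGraph V) (D : Multiset (Sym2 V)) : Prop :=
  ∃ l : List ((u : V) × (v : V) × G.Walk u v),
    (↑(l.map fun p => s(p.1, p.2.1)) : Multiset (Sym2 V)) = D ∧
    (∀ p ∈ l, p.2.2.IsPath) ∧
    l.Pairwise fun p q => ∀ e ∈ p.2.2.edges, e ∉ q.2.2.edges

/-- The complete bipartite graph with color classes `A` and `B`. -/
def completeBipartite (A B : Finset V) : SimpleGraph V where
  Adj u v := u ≠ v ∧ ((u ∈ A ∧ v ∈ B) ∨ (u ∈ B ∧ v ∈ A))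
  symm := ⟨fun _ _ h => ⟨h.1.symm, h.2.symm.imp And.symm And.symm⟩⟩
  loopless := ⟨fun _ h => h.1 rfl⟩

/-- The degree of a vertex in a demand graph: the number of demand edges
(counted with multiplicity) incident to it. -/
def demandDegree [DecidableEq V] (D : Multiset (Sym2 V)) (v : V) : ℕ :=
  (D.filter fun e => v ∈ e).card

/-- `D` is a demand graph on the pair of (disjoint) classes `(A, B)`:
every demand edge joins a vertex of `A` to a vertex of `B`. -/
def IsBipartiteDemand (A B : Finset V) (D : Multiset (Sym2 V)) : Prop :=
  ∀ e ∈ D, ∃ a ∈ A, ∃ b ∈ B, e = s(a, b)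


open Finset


section Kernel
variable {m : ℕ} {V : Type*} [DecidableEq V]

/-- Kernel / stable matching lemma for "grid" conflict structure. -/
lemma kernel_lemma (row col : Fin m → V) (φ : Fin m → ℕ)
    (hr : ∀ i j, i ≠ j → row i = row j → φ i ≠ φ j)
    (hc : ∀ i j, i ≠ j → col i = col j → φ i ≠ φ j) :
    ∀ S : Finset (Fin m), ∃ M ⊆ S,
      (∀ i ∈ M, ∀ j ∈ M, i ≠ j → row i ≠ row j ∧ col i ≠ col j) ∧
      (∀ g ∈ S, g ∉ M → ∃ mm ∈ M,
        (row mm = row g ∧ φ g < φ mm) ∨ (col mm = col g ∧ φ mm < φ g)) := by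
  intro S
  induction S using Finset.strongInductionOn with
  | _ S IH =>
  by_cases hterm : ∃ e ∈ S, ∃ f ∈ S, e ≠ f ∧ col e = col f ∧ φ e < φ f ∧
      (∀ h ∈ S, row h = row e → φ h ≤ φ e) ∧ (∀ h ∈ S, row h = row f → φ h ≤ φ f)
  · obtain ⟨e, he, f, hf, hef, hcolef, hφef, hmaxe, hmaxf⟩ := hterm
    have hsub : S.erase f ⊂ S := Finset.erase_ssubset hf
    obtain ⟨M, hMsub, hMmatch, hMdom⟩ := IH _ hsub
    refine ⟨M, hMsub.trans (Finset.erase_subset _ _), hMmatch, ?_⟩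
    intro g hg hgM
    by_cases hgf : g = f
    · rw [hgf]
      have heS' : e ∈ S.erase f := Finset.mem_erase.2 ⟨hef, he⟩
      by_cases heM : e ∈ M
      · exact ⟨e, heM, Or.inr ⟨hcolef, hφef⟩⟩
      · obtain ⟨mm, hmm, hcase⟩ := hMdom e heS' heM
        have hmmS : mm ∈ S := (Finset.erase_subset _ _) (hMsub hmm)
        rcases hcase with ⟨hrow, hlt⟩ | ⟨hcol, hlt⟩
        · exact absurd (hmaxe mm hmmS hrow) (by omega)
        · exact ⟨mm, hmm, Or.inr ⟨hcol.trans hcolef, by omega⟩⟩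
    · exact hMdom g (Finset.mem_erase.2 ⟨hgf, hg⟩) hgM
  · -- terminal case: take all row-maximal elements
    refine ⟨S.filter (fun g => ∀ h ∈ S, row h = row g → φ h ≤ φ g),
      Finset.filter_subset _ _, ?_, ?_⟩
    · intro i hi j hj hij
      rw [Finset.mem_filter] at hi hj
      constructor
      · intro hrowe
        have h1 := hi.2 j hj.1 hrowe.symm
        have h2 := hj.2 i hi.1 hrowe
        have : φ i = φ j := le_antisymm h2 h1
        exact hr i j hij hrowe this
      · intro hcole
        rcases lt_or_gt_of_ne (hc i j hij hcole) with hlt | hlt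
        · exact hterm ⟨i, hi.1, j, hj.1, hij, hcole, hlt, hi.2, hj.2⟩
        · exact hterm ⟨j, hj.1, i, hi.1, hij.symm, hcole.symm, hlt, hj.2, hi.2⟩
    · intro g hg hgM
      have hgnotmax : ¬ ∀ h ∈ S, row h = row g → φ h ≤ φ g := by
        intro hmax; exact hgM (Finset.mem_filter.2 ⟨hg, hmax⟩)
      push_neg at hgnotmax
      obtain ⟨h₀, hh₀S, hh₀row, hh₀φ⟩ := hgnotmax
      -- take the max of φ on the row class of g
      have hne : (S.filter (fun h => row h = row g)).Nonempty := ⟨g, by simp [hg]⟩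
      obtain ⟨mm, hmmmem, hmmax⟩ := Finset.exists_max_image _ φ hne
      rw [Finset.mem_filter] at hmmmem
      have hmmM : mm ∈ S.filter (fun g => ∀ h ∈ S, row h = row g → φ h ≤ φ g) := by
        refine Finset.mem_filter.2 ⟨hmmmem.1, ?_⟩
        intro h hhS hhrow
        exact hmmax h (Finset.mem_filter.2 ⟨hhS, hhrow.trans hmmmem.2⟩)
      refine ⟨mm, hmmM, Or.inl ⟨hmmmem.2, ?_⟩⟩
      have := hmmax h₀ (Finset.mem_filter.2 ⟨hh₀S, hh₀row⟩)
      omega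
end Kernel

section ListColor
variable {m : ℕ} {V : Type*} [DecidableEq V] {C : Type*} [DecidableEq C] [Nonempty C]

lemma listcolor (row col : Fin m → V) (φ : Fin m → ℕ)
    (hr : ∀ i j, i ≠ j → row i = row j → φ i ≠ φ j)
    (hc : ∀ i j, i ≠ j → col i = col j → φ i ≠ φ j) :
    ∀ R : Finset (Fin m), ∀ Λ : Fin m → Finset C,
      (∀ i ∈ R, (R.filter fun j => j ≠ i ∧ row j = row i ∧ φ i < φ j).card
        + (R.filter fun j => j ≠ i ∧ col j = col i ∧ φ j < φ i).card < (Λ i).card) →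
      ∃ x : Fin m → C, (∀ i ∈ R, x i ∈ Λ i) ∧
        ∀ i ∈ R, ∀ j ∈ R, i ≠ j → (row i = row j ∨ col i = col j) → x i ≠ x j := by
  intro R
  induction R using Finset.strongInductionOn with
  | _ R IH =>
  intro Λ hsize
  rcases R.eq_empty_or_nonempty with hR | ⟨i₀, hi₀⟩
  · subst hR
    exact ⟨fun _ => Classical.arbitrary C, by simp, by simp⟩
  · have hΛi₀ : (Λ i₀).Nonempty := by
      have := hsize i₀ hi₀
      exact Finset.card_pos.1 (by omega)
    obtain ⟨c₀, hc₀⟩ := hΛi₀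
    set S := R.filter (fun i => c₀ ∈ Λ i) with hSdef
    obtain ⟨M, hMS, hMmatch, hMdom⟩ := kernel_lemma row col φ hr hc S
    have hi₀S : i₀ ∈ S := Finset.mem_filter.2 ⟨hi₀, hc₀⟩
    have hMne : M.Nonempty := by
      by_cases h : i₀ ∈ M
      · exact ⟨i₀, h⟩
      · obtain ⟨mm, hmm, -⟩ := hMdom i₀ hi₀S h
        exact ⟨mm, hmm⟩
    have hMR : M ⊆ R := hMS.trans (Finset.filter_subset _ _)
    have hR'ss : R \ M ⊂ R := by
      obtain ⟨mm, hmm⟩ := hMne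
      refine Finset.ssubset_iff_of_subset (Finset.sdiff_subset) |>.2 ⟨mm, hMR hmm, ?_⟩
      simp [hmm]
    classical
    set Λ' : Fin m → Finset C := fun i => if i ∈ S then (Λ i).erase c₀ else Λ i with hΛ'def
    have hΛ'S : ∀ i, i ∈ S → Λ' i = (Λ i).erase c₀ := by
      intro i hiS; simp only [hΛ'def]; rw [if_pos hiS]
    have hΛ'nS : ∀ i, i ∉ S → Λ' i = Λ i := by
      intro i hiS; simp only [hΛ'def]; rw [if_neg hiS]
    have hsize' : ∀ i ∈ R \ M,
        ((R \ M).filter fun j => j ≠ i ∧ row j = row i ∧ φ i < φ j).card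
        + ((R \ M).filter fun j => j ≠ i ∧ col j = col i ∧ φ j < φ i).card < (Λ' i).card := by
      intro i hi
      have hiR : i ∈ R := (Finset.mem_sdiff.1 hi).1
      have hiM : i ∉ M := (Finset.mem_sdiff.1 hi).2
      have hsub1 : ((R \ M).filter fun j => j ≠ i ∧ row j = row i ∧ φ i < φ j) ⊆
          (R.filter fun j => j ≠ i ∧ row j = row i ∧ φ i < φ j) :=
        Finset.filter_subset_filter _ (Finset.sdiff_subset)
      have hsub2 : ((R \ M).filter fun j => j ≠ i ∧ col j = col i ∧ φ j < φ i) ⊆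
          (R.filter fun j => j ≠ i ∧ col j = col i ∧ φ j < φ i) :=
        Finset.filter_subset_filter _ (Finset.sdiff_subset)
      by_cases hiS : i ∈ S
      · obtain ⟨mm, hmmM, hmmcase⟩ := hMdom i hiS hiM
        have hmmne : mm ≠ i := fun h => hiM (h ▸ hmmM)
        have hmmR : mm ∈ R := hMR hmmM
        have hΛ'i : (Λ' i).card = (Λ i).card - 1 := by
          have : c₀ ∈ Λ i := (Finset.mem_filter.1 hiS).2
          rw [hΛ'S i hiS]
          exact Finset.card_erase_of_mem this
        have hcΛ : 0 < (Λ i).card := by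
          have := hsize i hiR; omega
        rw [hΛ'i]
        rcases hmmcase with ⟨hrow, hlt⟩ | ⟨hcol, hlt⟩
        · have hmmF : mm ∈ R.filter fun j => j ≠ i ∧ row j = row i ∧ φ i < φ j :=
            Finset.mem_filter.2 ⟨hmmR, hmmne, hrow, hlt⟩
          have hnot : mm ∉ (R \ M) := by simp [hmmM]
          have h1 : ((R \ M).filter fun j => j ≠ i ∧ row j = row i ∧ φ i < φ j).card
              < (R.filter fun j => j ≠ i ∧ row j = row i ∧ φ i < φ j).card := by
            refine Finset.card_lt_card ⟨hsub1, fun hsub => ?_⟩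
            have := hsub hmmF
            exact hnot (Finset.filter_subset _ _ this)
          have h2 := Finset.card_le_card hsub2
          have := hsize i hiR
          omega
        · have hmmF : mm ∈ R.filter fun j => j ≠ i ∧ col j = col i ∧ φ j < φ i :=
            Finset.mem_filter.2 ⟨hmmR, hmmne, hcol, hlt⟩
          have hnot : mm ∉ (R \ M) := by simp [hmmM]
          have h2 : ((R \ M).filter fun j => j ≠ i ∧ col j = col i ∧ φ j < φ i).card
              < (R.filter fun j => j ≠ i ∧ col j = col i ∧ φ j < φ i).card := by
            refine Finset.card_lt_card ⟨hsub2, fun hsub => ?_⟩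
            have := hsub hmmF
            exact hnot (Finset.filter_subset _ _ this)
          have h1 := Finset.card_le_card hsub1
          have := hsize i hiR
          omega
      · rw [hΛ'nS i hiS]
        have h1 := Finset.card_le_card hsub1
        have h2 := Finset.card_le_card hsub2
        have := hsize i hiR
        omega
    obtain ⟨x', hx'mem, hx'prop⟩ := IH _ hR'ss Λ' hsize'
    refine ⟨fun i => if i ∈ M then c₀ else x' i, ?_, ?_⟩
    · intro i hi
      by_cases hiM : i ∈ M
      · simpa [hiM] using (Finset.mem_filter.1 (hMS hiM)).2
      · have hiR' : i ∈ R \ M := Finset.mem_sdiff.2 ⟨hi, hiM⟩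
        have hmem := hx'mem i hiR'
        by_cases hiS : i ∈ S
        · rw [hΛ'S i hiS] at hmem
          simpa [hiM] using Finset.mem_of_mem_erase hmem
        · rw [hΛ'nS i hiS] at hmem
          simpa [hiM] using hmem
    · intro i hi j hj hij hshare
      by_cases hiM : i ∈ M <;> by_cases hjM : j ∈ M
      · have := hMmatch i hiM j hjM hij
        rcases hshare with h | h
        · exact absurd h this.1
        · exact absurd h this.2
      · simp only [if_pos hiM, if_neg hjM]
        intro heq
        have hjR' : j ∈ R \ M := Finset.mem_sdiff.2 ⟨hj, hjM⟩
        have hx'j := hx'mem j hjR'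
        by_cases hjS : j ∈ S
        · rw [hΛ'S j hjS, ← heq] at hx'j
          exact (Finset.notMem_erase _ _) hx'j
        · have : c₀ ∉ Λ j := fun h => hjS (Finset.mem_filter.2 ⟨hj, h⟩)
          rw [hΛ'nS j hjS, ← heq] at hx'j
          exact this hx'j
      · simp only [if_neg hiM, if_pos hjM]
        intro heq
        have hiR' : i ∈ R \ M := Finset.mem_sdiff.2 ⟨hi, hiM⟩
        have hx'i := hx'mem i hiR'
        by_cases hiS : i ∈ S
        · rw [hΛ'S i hiS, heq] at hx'i
          exact (Finset.notMem_erase _ _) hx'i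
        · have : c₀ ∉ Λ i := fun h => hiS (Finset.mem_filter.2 ⟨hi, h⟩)
          rw [hΛ'nS i hiS, heq] at hx'i
          exact this hx'i
      · simp only [if_neg hiM, if_neg hjM]
        exact hx'prop i (Finset.mem_sdiff.2 ⟨hi, hiM⟩) j (Finset.mem_sdiff.2 ⟨hj, hjM⟩) hij hshare
end ListColor



section Kempe
variable {m K : ℕ} {V : Type*} [DecidableEq V]

/-- Kempe chain recoloring: produce a proper coloring which misses some color `α`
both on the row `rs` and the column `cs`. -/
lemma kempe_step (row col : Fin m → V) (φ : Fin m → ℕ)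
    (hφK : ∀ i, φ i < K)
    (hr : ∀ i j, i ≠ j → row i = row j → φ i ≠ φ j)
    (hc : ∀ i j, i ≠ j → col i = col j → φ i ≠ φ j)
    (rs cs : V)
    (hrdeg : (univ.filter fun i => row i = rs).card < K)
    (hcdeg : (univ.filter fun i => col i = cs).card < K) :
    ∃ φ' : Fin m → ℕ, (∀ i, φ' i < K) ∧
      (∀ i j, i ≠ j → row i = row j → φ' i ≠ φ' j) ∧
      (∀ i j, i ≠ j → col i = col j → φ' i ≠ φ' j) ∧
      ∃ α, α < K ∧ (∀ i, row i = rs → φ' i ≠ α) ∧ (∀ i, col i = cs → φ' i ≠ α) := by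
  classical
  set rowset := (univ.filter fun i => row i = rs).image φ with hrowset
  set colset := (univ.filter fun i => col i = cs).image φ with hcolset
  have hrowcard : rowset.card < K := lt_of_le_of_lt Finset.card_image_le hrdeg
  have hcolcard : colset.card < K := lt_of_le_of_lt Finset.card_image_le hcdeg
  obtain ⟨α, hαK, hαrow⟩ : ∃ α ∈ Finset.range K, α ∉ rowset := by
    have hns : ¬ (Finset.range K ⊆ rowset) := by
      intro h
      have := Finset.card_le_card h
      simp only [Finset.card_range] at this
      omega
    rcases Finset.not_subset.1 hns with ⟨α, h1, h2⟩
    exact ⟨α, h1, h2⟩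
  obtain ⟨β, hβK, hβcol⟩ : ∃ β ∈ Finset.range K, β ∉ colset := by
    have hns : ¬ (Finset.range K ⊆ colset) := by
      intro h
      have := Finset.card_le_card h
      simp only [Finset.card_range] at this
      omega
    rcases Finset.not_subset.1 hns with ⟨β, h1, h2⟩
    exact ⟨β, h1, h2⟩
  rw [Finset.mem_range] at hαK hβK
  have hmemrow : ∀ i, row i = rs → φ i ≠ α := by
    intro i hi heq
    exact hαrow (Finset.mem_image.2 ⟨i, Finset.mem_filter.2 ⟨Finset.mem_univ _, hi⟩, heq⟩)
  have hmemcol : ∀ i, col i = cs → φ i ≠ β := by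
    intro i hi heq
    exact hβcol (Finset.mem_image.2 ⟨i, Finset.mem_filter.2 ⟨Finset.mem_univ _, hi⟩, heq⟩)
  by_cases hfree : ∀ i, col i = cs → φ i ≠ α
  · exact ⟨φ, hφK, hr, hc, α, hαK, hmemrow, hfree⟩
  push_neg at hfree
  obtain ⟨j₀, hj₀c, hj₀φ⟩ := hfree
  have hαβ : α ≠ β := by
    intro h
    exact hmemcol j₀ hj₀c (h ▸ hj₀φ)
  set step : Fin m → Fin m → Prop := fun x y =>
    (φ x = α ∧ φ y = β ∧ row y = row x) ∨ (φ x = β ∧ φ y = α ∧ col y = col x) with hstepdef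
  set Cp : Fin m → Prop := fun j => Relation.ReflTransGen step j₀ j with hCdef
  have hCj₀ : Cp j₀ := Relation.ReflTransGen.refl
  have hclosure : ∀ j j', Cp j → step j j' → Cp j' := fun j j' hj hs => hj.tail hs
  have hcolorC : ∀ j, Cp j → φ j = α ∨ φ j = β := by
    intro j hj
    induction hj with
    | refl => exact Or.inl hj₀φ
    | tail _ hstep _ =>
      rcases hstep with ⟨_, h, _⟩ | ⟨_, h, _⟩
      · exact Or.inr h
      · exact Or.inl h
  have hpred : ∀ j, Cp j → j ≠ j₀ → ∃ w, Cp w ∧ step w j := by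
    intro j hj hne
    rcases hj.cases_tail with h | ⟨w, hw, hstep⟩
    · exact absurd h hne
    · exact ⟨w, hw, hstep⟩
  set σ : ℕ → ℕ := fun c => if c = α then β else if c = β then α else c with hσdef
  have hσinj : ∀ a b, σ a = σ b → a = b := by
    intro a b h
    simp only [hσdef] at h
    split_ifs at h <;> omega
  set φ' : Fin m → ℕ := fun i => if Cp i then σ (φ i) else φ i with hφ'def
  have hφ'nC : ∀ i, ¬ Cp i → φ' i = φ i := by
    intro i h; simp only [hφ'def]; rw [if_neg h]
  have hφ'Cα : ∀ i, Cp i → φ i = α → φ' i = β := by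
    intro i h hα; simp only [hφ'def, hσdef]; rw [if_pos h, hα]; simp
  have hφ'Cβ : ∀ i, Cp i → φ i = β → φ' i = α := by
    intro i h hβ; simp only [hφ'def, hσdef]; rw [if_pos h, hβ]
    simp [Ne.symm hαβ]
  have hj₀ne : ∀ i, φ i = β → i ≠ j₀ := by
    intro i hβ h
    rw [h, hj₀φ] at hβ
    exact hαβ hβ
  -- helper for mixed row case
  have helper_row : ∀ i j, i ≠ j → row i = row j → Cp i → ¬ Cp j → φ' i = φ' j → False := by
    intro i j hij hrow hCi hCj heq
    rcases hcolorC i hCi with hφi | hφi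
    · rw [hφ'Cα i hCi hφi, hφ'nC j hCj] at heq
      exact hCj (hclosure i j hCi (Or.inl ⟨hφi, heq.symm, hrow.symm⟩))
    · rw [hφ'Cβ i hCi hφi, hφ'nC j hCj] at heq
      obtain ⟨w, hCw, hstep⟩ := hpred i hCi (hj₀ne i hφi)
      rcases hstep with ⟨hwα, -, hroww⟩ | ⟨-, hiα, -⟩
      · by_cases hwj : w = j
        · exact hCj (hwj ▸ hCw)
        · exact hr w j hwj (hroww.symm.trans hrow) (by rw [hwα, ← heq])
      · exact hαβ (hiα.symm.trans hφi)
  have helper_col : ∀ i j, i ≠ j → col i = col j → Cp i → ¬ Cp j → φ' i = φ' j → False := by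
    intro i j hij hcol hCi hCj heq
    rcases hcolorC i hCi with hφi | hφi
    · rw [hφ'Cα i hCi hφi, hφ'nC j hCj] at heq
      by_cases hi0 : i = j₀
      · exact hmemcol j ((hi0 ▸ hcol).symm.trans hj₀c) heq.symm
      · obtain ⟨w, hCw, hstep⟩ := hpred i hCi hi0
        rcases hstep with ⟨-, hiβ, -⟩ | ⟨hwβ, -, hcolw⟩
        · exact hαβ (hφi.symm.trans hiβ)
        · by_cases hwj : w = j
          · exact hCj (hwj ▸ hCw)
          · exact hc w j hwj (hcolw.symm.trans hcol) (by rw [hwβ, ← heq])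
    · rw [hφ'Cβ i hCi hφi, hφ'nC j hCj] at heq
      exact hCj (hclosure i j hCi (Or.inr ⟨hφi, heq.symm, hcol.symm⟩))
  refine ⟨φ', ?_, ?_, ?_, α, hαK, ?_, ?_⟩
  · intro i
    by_cases h : Cp i
    · have := hφK i
      simp only [hφ'def, hσdef]; rw [if_pos h]
      split_ifs <;> omega
    · rw [hφ'nC i h]; exact hφK i
  · intro i j hij hrow heq
    by_cases hCi : Cp i <;> by_cases hCj : Cp j
    · simp only [hφ'def] at heq; rw [if_pos hCi, if_pos hCj] at heq
      exact hr i j hij hrow (hσinj _ _ heq)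
    · exact helper_row i j hij hrow hCi hCj heq
    · exact helper_row j i (Ne.symm hij) hrow.symm hCj hCi heq.symm
    · rw [hφ'nC i hCi, hφ'nC j hCj] at heq
      exact hr i j hij hrow heq
  · intro i j hij hcol heq
    by_cases hCi : Cp i <;> by_cases hCj : Cp j
    · simp only [hφ'def] at heq; rw [if_pos hCi, if_pos hCj] at heq
      exact hc i j hij hcol (hσinj _ _ heq)
    · exact helper_col i j hij hcol hCi hCj heq
    · exact helper_col j i (Ne.symm hij) hcol.symm hCj hCi heq.symm
    · rw [hφ'nC i hCi, hφ'nC j hCj] at heq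
      exact hc i j hij hcol heq
  · -- α free on row rs
    intro i hrow heq
    by_cases hCi : Cp i
    · rcases hcolorC i hCi with hφi | hφi
      · rw [hφ'Cα i hCi hφi] at heq
        exact hαβ heq.symm
      · obtain ⟨w, hCw, hstep⟩ := hpred i hCi (hj₀ne i hφi)
        rcases hstep with ⟨hwα, -, hroww⟩ | ⟨-, hiα, -⟩
        · exact hmemrow w (hroww.symm.trans hrow) hwα
        · exact hαβ (hiα.symm.trans hφi)
    · rw [hφ'nC i hCi] at heq
      exact hmemrow i hrow heq
  · -- α free on col cs
    intro i hcol heq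
    by_cases hCi : Cp i
    · rcases hcolorC i hCi with hφi | hφi
      · rw [hφ'Cα i hCi hφi] at heq
        exact hαβ heq.symm
      · exact hmemcol i hcol hφi
    · rw [hφ'nC i hCi] at heq
      by_cases hi0 : i = j₀
      · exact hCi (hi0 ▸ hCj₀)
      · exact hc i j₀ hi0 (hcol.trans hj₀c.symm) (heq.trans hj₀φ.symm)
end Kempe

section Konig
variable {V : Type*} [DecidableEq V]

lemma filter_castSucc_card_le {m : ℕ} (p : Fin (m+1) → Prop) [DecidablePred p] :
    (univ.filter fun i : Fin m => p i.castSucc).card ≤ (univ.filter fun i : Fin (m+1) => p i).card := by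
  apply Finset.card_le_card_of_injOn (fun i => Fin.castSucc i)
  · intro i hi
    simp only [Finset.mem_coe, Finset.mem_filter, Finset.mem_univ, true_and] at hi ⊢
    exact hi
  · intro i _ j _ h
    exact Fin.castSucc_injective _ h

lemma filter_castSucc_card_lt {m : ℕ} (p : Fin (m+1) → Prop) [DecidablePred p]
    (hlast : p (Fin.last m)) :
    (univ.filter fun i : Fin m => p i.castSucc).card < (univ.filter fun i : Fin (m+1) => p i).card := by
  have hsub : ((univ.filter fun i : Fin m => p i.castSucc).image Fin.castSucc) ⊆
      (univ.filter fun i : Fin (m+1) => p i).erase (Fin.last m) := by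
    intro j hj
    simp only [Finset.mem_image, Finset.mem_filter, Finset.mem_univ, true_and] at hj
    obtain ⟨i, hpi, rfl⟩ := hj
    refine Finset.mem_erase.2 ⟨?_, Finset.mem_filter.2 ⟨Finset.mem_univ _, hpi⟩⟩
    exact (Fin.castSucc_lt_last i).ne
  have h1 : (univ.filter fun i : Fin m => p i.castSucc).card =
      ((univ.filter fun i : Fin m => p i.castSucc).image Fin.castSucc).card :=
    (Finset.card_image_of_injective _ (Fin.castSucc_injective _)).symm
  have h2 := Finset.card_le_card hsub
  have h3 : (Fin.last m) ∈ (univ.filter fun i : Fin (m+1) => p i) :=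
    Finset.mem_filter.2 ⟨Finset.mem_univ _, hlast⟩
  have h4 := Finset.card_erase_of_mem h3
  have h5 : 0 < (univ.filter fun i : Fin (m+1) => p i).card := Finset.card_pos.2 ⟨_, h3⟩
  omega

/-- König-type theorem: a "grid" of m items with row- and column-multiplicities at most K
can be properly colored with K colors. -/
lemma exists_proper_coloring : ∀ (m K : ℕ) (row col : Fin m → V),
    (∀ v, (univ.filter fun i => row i = v).card ≤ K) →
    (∀ v, (univ.filter fun i => col i = v).card ≤ K) →
    ∃ φ : Fin m → ℕ, (∀ i, φ i < K) ∧
      (∀ i j, i ≠ j → row i = row j → φ i ≠ φ j) ∧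
      (∀ i j, i ≠ j → col i = col j → φ i ≠ φ j) := by
  intro m
  induction m with
  | zero =>
    intro K row col _ _
    exact ⟨fun i => i.elim0, fun i => i.elim0, fun i => i.elim0, fun i => i.elim0⟩
  | succ m IH =>
    intro K row col hrow hcol
    obtain ⟨φ₀, hφ₀K, hφ₀r, hφ₀c⟩ := IH K (fun i => row i.castSucc) (fun i => col i.castSucc)
      (fun v => le_trans (filter_castSucc_card_le (fun i => row i = v)) (hrow v))
      (fun v => le_trans (filter_castSucc_card_le (fun i => col i = v)) (hcol v))
    have hrlt : (univ.filter fun i : Fin m => row i.castSucc = row (Fin.last m)).card < K :=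
      lt_of_lt_of_le (filter_castSucc_card_lt (fun i => row i = row (Fin.last m)) rfl) (hrow _)
    have hclt : (univ.filter fun i : Fin m => col i.castSucc = col (Fin.last m)).card < K :=
      lt_of_lt_of_le (filter_castSucc_card_lt (fun i => col i = col (Fin.last m)) rfl) (hcol _)
    obtain ⟨φ', hφ'K, hφ'r, hφ'c, α, hαK, hαrow, hαcol⟩ :=
      kempe_step (fun i : Fin m => row i.castSucc) (fun i => col i.castSucc) φ₀ hφ₀K hφ₀r hφ₀c
        (row (Fin.last m)) (col (Fin.last m)) hrlt hclt
    refine ⟨Fin.lastCases α φ', ?_, ?_, ?_⟩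
    · intro i
      induction i using Fin.lastCases with
      | last => simpa using hαK
      | cast k => simpa using hφ'K k
    · intro i j hij hroweq
      induction i using Fin.lastCases with
      | last =>
        induction j using Fin.lastCases with
        | last => exact absurd rfl hij
        | cast k =>
          simp only [Fin.lastCases_last, Fin.lastCases_castSucc]
          exact fun h => hαrow k hroweq.symm h.symm
      | cast k =>
        induction j using Fin.lastCases with
        | last =>
          simp only [Fin.lastCases_last, Fin.lastCases_castSucc]
          exact hαrow k hroweq
        | cast l =>
          simp only [Fin.lastCases_castSucc]
          exact hφ'r k l (fun h => hij (by rw [h])) hroweq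
    · intro i j hij hcoleq
      induction i using Fin.lastCases with
      | last =>
        induction j using Fin.lastCases with
        | last => exact absurd rfl hij
        | cast k =>
          simp only [Fin.lastCases_last, Fin.lastCases_castSucc]
          exact fun h => hαcol k hcoleq.symm h.symm
      | cast k =>
        induction j using Fin.lastCases with
        | last =>
          simp only [Fin.lastCases_last, Fin.lastCases_castSucc]
          exact hαcol k hcoleq
        | cast l =>
          simp only [Fin.lastCases_castSucc]
          exact hφ'c k l (fun h => hij (by rw [h])) hcoleq
end Konig



section RoundRobin
variable {V : Type*} [DecidableEq V] {m : ℕ}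

/-- Balanced round-robin assignment of columns to items, injective within each `skey`-group. -/
lemma roundrobin (skey : Fin m → V) (I : Finset (Fin m)) (cols : List V)
    (hnodup : cols.Nodup) (hq : 0 < cols.length)
    (hdeg : ∀ v, (I.filter fun i => skey i = v).card ≤ cols.length) :
    ∃ y : Fin m → V, (∀ i, y i ∈ cols) ∧
      (∀ i ∈ I, ∀ j ∈ I, i ≠ j → skey i = skey j → y i ≠ y j) ∧
      (∀ v, (I.filter fun i => y i = v).card ≤ (I.card - 1) / cols.length + 1) := by
  classical
  set q := cols.length with hqdef
  set eV := (I.image skey).toList with heVdef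
  set pos : V → ℕ := fun v => eV.idxOf v with hposdef
  have hposinj : ∀ i ∈ I, ∀ j ∈ I, pos (skey i) = pos (skey j) → skey i = skey j := by
    intro i hi j hj h
    have hmi : skey i ∈ eV := by
      rw [heVdef, Finset.mem_toList]
      exact Finset.mem_image_of_mem _ hi
    have hmj : skey j ∈ eV := by
      rw [heVdef, Finset.mem_toList]
      exact Finset.mem_image_of_mem _ hj
    have h1 := List.idxOf_get (List.idxOf_lt_length_iff.2 hmi)
    have h2 := List.idxOf_get (List.idxOf_lt_length_iff.2 hmj)
    rw [← h1, ← h2]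
    congr 1
    exact Fin.ext h
  set Lt : Fin m → Fin m → Prop := fun j i =>
    pos (skey j) < pos (skey i) ∨ (skey j = skey i ∧ j < i) with hLtdef
  have hLtirr : ∀ i, ¬ Lt i i := by
    intro i h
    rcases h with h | ⟨-, h⟩ <;> exact absurd h (lt_irrefl _)
  have hLttot : ∀ i ∈ I, ∀ j ∈ I, i ≠ j → Lt i j ∨ Lt j i := by
    intro i hi j hj hij
    rcases lt_trichotomy (pos (skey i)) (pos (skey j)) with h | h | h
    · exact Or.inl (Or.inl h)
    · have hsk := hposinj i hi j hj h
      rcases lt_or_gt_of_ne (fun hh : i = j => hij hh) with h' | h'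
      · exact Or.inl (Or.inr ⟨hsk, h'⟩)
      · exact Or.inr (Or.inr ⟨hsk.symm, h'⟩)
    · exact Or.inr (Or.inl h)
  have hLttrans : ∀ k i j, Lt k i → Lt i j → Lt k j := by
    intro k i j h1 h2
    rcases h1 with h1 | ⟨e1, l1⟩ <;> rcases h2 with h2 | ⟨e2, l2⟩
    · exact Or.inl (h1.trans h2)
    · exact Or.inl (by rw [← e2]; exact h1)
    · exact Or.inl (by rw [e1]; exact h2)
    · exact Or.inr ⟨e1.trans e2, l1.trans l2⟩
  set ℓ : Fin m → ℕ := fun i => (I.filter fun j => Lt j i).card with hℓdef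
  have hℓlt : ∀ i ∈ I, ∀ j, Lt i j → ℓ i < ℓ j := by
    intro i hi j hij
    have hsub : insert i (I.filter fun k => Lt k i) ⊆ (I.filter fun k => Lt k j) := by
      intro k hk
      rcases Finset.mem_insert.1 hk with rfl | hk
      · exact Finset.mem_filter.2 ⟨hi, hij⟩
      · rw [Finset.mem_filter] at hk ⊢
        exact ⟨hk.1, hLttrans _ _ _ hk.2 hij⟩
    have hni : i ∉ (I.filter fun k => Lt k i) := by
      simp only [Finset.mem_filter]
      exact fun h => hLtirr i h.2
    have := Finset.card_le_card hsub
    rw [Finset.card_insert_of_notMem hni] at this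
    simp only [hℓdef]
    omega
  have hℓinj : ∀ i ∈ I, ∀ j ∈ I, i ≠ j → ℓ i ≠ ℓ j := by
    intro i hi j hj hij
    rcases hLttot i hi j hj hij with h | h
    · exact fun hh => absurd hh (Nat.ne_of_lt (hℓlt i hi j h))
    · exact fun hh => absurd hh.symm (Nat.ne_of_lt (hℓlt j hj i h))
  have hℓle : ∀ i ∈ I, ℓ i ≤ I.card - 1 := by
    intro i hi
    have hsub : (I.filter fun k => Lt k i) ⊆ I.erase i := by
      intro k hk
      rw [Finset.mem_filter] at hk
      refine Finset.mem_erase.2 ⟨?_, hk.1⟩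
      intro h
      exact hLtirr i (h ▸ hk.2)
    have := Finset.card_le_card hsub
    rw [Finset.card_erase_of_mem hi] at this
    simp only [hℓdef]
    omega
  have hgap : ∀ i ∈ I, ∀ j ∈ I, skey i = skey j → Lt i j → ℓ j - ℓ i < q := by
    intro i hi j hj hsk hij
    have hsub : (I.filter fun k => Lt k j) ⊆
        (I.filter fun k => Lt k i) ∪ ((I.filter fun k => skey k = skey i).erase j) := by
      intro k hk
      rw [Finset.mem_filter] at hk
      rcases hk.2 with h | ⟨e, l⟩
      · have : pos (skey j) = pos (skey i) := by rw [hsk]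
        rw [this] at h
        exact Finset.mem_union_left _ (Finset.mem_filter.2 ⟨hk.1, Or.inl h⟩)
      · refine Finset.mem_union_right _ (Finset.mem_erase.2 ⟨?_, Finset.mem_filter.2 ⟨hk.1, ?_⟩⟩)
        · exact fun h => absurd (h ▸ l) (lt_irrefl _)
        · rw [e, ← hsk]
    have hcard := Finset.card_le_card hsub
    have hcard2 := Finset.card_union_le (I.filter fun k => Lt k i)
      ((I.filter fun k => skey k = skey i).erase j)
    have hje : j ∈ (I.filter fun k => skey k = skey i) :=
      Finset.mem_filter.2 ⟨hj, hsk.symm⟩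
    have hce := Finset.card_erase_of_mem hje
    have hdegi := hdeg (skey i)
    have hpos : 0 < (I.filter fun k => skey k = skey i).card := Finset.card_pos.2 ⟨j, hje⟩
    simp only [hℓdef]
    omega
  refine ⟨fun i => cols.get ⟨ℓ i % q, Nat.mod_lt _ hq⟩, fun i => List.get_mem _ _, ?_, ?_⟩
  · intro i hi j hj hij hsk heq
    have hmodeq : ℓ i % q = ℓ j % q := by
      have := (List.Nodup.get_inj_iff hnodup).1 heq
      exact congrArg Fin.val this
    -- wlog Lt i j
    have key : ∀ i' ∈ I, ∀ j' ∈ I, skey i' = skey j' → Lt i' j' → ℓ i' % q = ℓ j' % q → False := by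
      intro i' hi' j' hj' hsk' hlt' hmod'
      have h1 : ℓ i' < ℓ j' := hℓlt i' hi' j' hlt'
      have h2 : ℓ j' - ℓ i' < q := hgap i' hi' j' hj' hsk' hlt'
      have hdvd : q ∣ ℓ j' - ℓ i' := (Nat.modEq_iff_dvd' (le_of_lt h1)).1 hmod'
      have := Nat.le_of_dvd (by omega) hdvd
      omega
    rcases hLttot i hi j hj hij with h | h
    · exact key i hi j hj hsk h hmodeq
    · exact key j hj i hi hsk.symm h hmodeq.symm
  · intro v
    have : ((I.filter fun i => cols.get ⟨ℓ i % q, Nat.mod_lt _ hq⟩ = v)).card ≤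
        (Finset.range ((I.card - 1) / q + 1)).card := by
      apply Finset.card_le_card_of_injOn (fun i => ℓ i / q)
      · intro i hi
        rw [Finset.mem_coe, Finset.mem_filter] at hi
        rw [Finset.mem_coe, Finset.mem_range]
        have h1 := hℓle i hi.1
        have h2 : ℓ i / q ≤ (I.card - 1) / q := Nat.div_le_div_right h1
        simpa using Nat.lt_succ_of_le h2
      · intro i hi j hj hdiv
        simp only [Finset.coe_filter, Set.mem_setOf_eq] at hi hj
        have hdiv' : ℓ i / q = ℓ j / q := hdiv
        have hmod : ℓ i % q = ℓ j % q := by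
          have heq : cols.get ⟨ℓ i % q, Nat.mod_lt _ hq⟩ = cols.get ⟨ℓ j % q, Nat.mod_lt _ hq⟩ :=
            hi.2.trans hj.2.symm
          have := (List.Nodup.get_inj_iff hnodup).1 heq
          exact congrArg Fin.val this
        have h1 := Nat.div_add_mod (ℓ i) q
        have h2 := Nat.div_add_mod (ℓ j) q
        rw [hdiv', hmod] at h1
        have hℓeq : ℓ i = ℓ j := by omega
        by_contra hne
        exact hℓinj i hi.1 j hj.1 hne hℓeq
    simpa using this
end RoundRobin



section Construction
variable {V : Type*} [DecidableEq V]

/-- The heart of the construction: given indexed bipartite demands with degree bounds,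
produce intermediate-vertex assignments `y` (in `B`) and `x` (in `A`) so that the
length-3 paths `s i — y i — x i — t i` are pairwise edge-disjoint. -/
theorem main_construction (A B : Finset V) (hdisj : Disjoint A B)
    (n : ℕ) (sf tf : Fin n → V) (hsA : ∀ i, sf i ∈ A) (htB : ∀ i, tf i ∈ B)
    (DA DB : ℕ)
    (hcntA : ∀ v, (univ.filter fun i => sf i = v).card ≤ DA)
    (hcntB : ∀ v, (univ.filter fun i => tf i = v).card ≤ DB)
    (hb2 : 2 ≤ B.card)
    (hDAq : DA ≤ B.card / 2)
    (hnum : 3 * (((B.card - B.card / 2) * DB - 1) / (B.card / 2) + 1) + DB + 1 ≤ A.card) :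
    ∃ y x : Fin n → V, (∀ i, y i ∈ B) ∧ (∀ i, x i ∈ A) ∧ (∀ i, y i ≠ tf i) ∧
      (∀ i j, i ≠ j → sf i = sf j → y i ≠ y j) ∧
      (∀ i j, i ≠ j → (y i = y j ∨ y i = tf j ∨ tf i = y j ∨ tf i = tf j) → x i ≠ x j) ∧
      (∀ i j, (y j = y i ∨ y j = tf i) → x i ≠ sf j) := by
  classical
  set q₁ := B.card / 2 with hq₁def
  obtain ⟨B₁, hB₁sub, hB₁card⟩ := Finset.exists_subset_card_eq
    (show q₁ ≤ B.card from Nat.div_le_self _ _)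
  set B₂ := B \ B₁ with hB₂def
  have hB₂card : B₂.card = B.card - q₁ := by rw [hB₂def, Finset.card_sdiff_of_subset hB₁sub, hB₁card]
  have hq₁pos : 0 < B₁.card := by rw [hB₁card]; omega
  have hq₂pos : 0 < B₂.card := by rw [hB₂card]; omega
  have hq₁₂ : B₁.card ≤ B₂.card := by rw [hB₁card, hB₂card]; omega
  have hdisj12 : Disjoint B₁ B₂ := disjoint_sdiff_self_right
  set MB := ((B.card - q₁) * DB - 1) / q₁ + 1 with hMBdef
  -- round robin on both parts
  have hdeg₁ : ∀ v, ((univ.filter fun i => tf i ∈ B₂).filter fun i => sf i = v).card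
      ≤ B₁.toList.length := by
    intro v
    rw [Finset.length_toList, hB₁card]
    refine le_trans (le_trans (Finset.card_le_card ?_) (hcntA v)) hDAq
    exact Finset.filter_subset_filter _ (Finset.filter_subset _ _)
  have hdeg₂ : ∀ v, ((univ.filter fun i => ¬ (tf i ∈ B₂)).filter fun i => sf i = v).card
      ≤ B₂.toList.length := by
    intro v
    rw [Finset.length_toList]
    refine le_trans (le_trans (le_trans (Finset.card_le_card ?_) (hcntA v)) (hDAq.trans ?_)) hq₁₂
    · exact Finset.filter_subset_filter _ (Finset.filter_subset _ _)
    · rw [hB₁card]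
  obtain ⟨y₁, hy₁mem, hy₁inj, hy₁load⟩ := roundrobin sf (univ.filter fun i => tf i ∈ B₂)
    B₁.toList (Finset.nodup_toList _) (by rw [Finset.length_toList]; exact hq₁pos) hdeg₁
  obtain ⟨y₂, hy₂mem, hy₂inj, hy₂load⟩ := roundrobin sf (univ.filter fun i => ¬ (tf i ∈ B₂))
    B₂.toList (Finset.nodup_toList _) (by rw [Finset.length_toList]; exact hq₂pos) hdeg₂
  set y : Fin n → V := fun i => if tf i ∈ B₂ then y₁ i else y₂ i with hydef
  have hy1B : ∀ i, tf i ∈ B₂ → y i ∈ B₁ := by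
    intro i h
    simp only [hydef, if_pos h]
    exact Finset.mem_toList.1 (hy₁mem i)
  have hy2B : ∀ i, tf i ∉ B₂ → y i ∈ B₂ := by
    intro i h
    simp only [hydef, if_neg h]
    exact Finset.mem_toList.1 (hy₂mem i)
  have htf1 : ∀ i, tf i ∉ B₂ → tf i ∈ B₁ := by
    intro i h
    have := htB i
    rw [hB₂def] at h
    simp only [Finset.mem_sdiff] at h
    tauto
  have hyB : ∀ i, y i ∈ B := by
    intro i
    by_cases h : tf i ∈ B₂
    · exact hB₁sub (hy1B i h)
    · exact (Finset.sdiff_subset) (hy2B i h)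
  have hynott : ∀ i, y i ≠ tf i := by
    intro i
    by_cases h : tf i ∈ B₂
    · exact fun heq => (Finset.disjoint_left.1 hdisj12) (hy1B i h) (heq ▸ h)
    · exact fun heq => (Finset.disjoint_left.1 hdisj12) (htf1 i h) (heq ▸ (hy2B i h))
  -- Y2
  have hY2 : ∀ i j, i ≠ j → sf i = sf j → y i ≠ y j := by
    intro i j hij hsk
    by_cases h1 : tf i ∈ B₂ <;> by_cases h2 : tf j ∈ B₂
    · simp only [hydef, if_pos h1, if_pos h2]
      exact hy₁inj i (Finset.mem_filter.2 ⟨Finset.mem_univ _, h1⟩)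
        j (Finset.mem_filter.2 ⟨Finset.mem_univ _, h2⟩) hij hsk
    · exact fun heq => (Finset.disjoint_left.1 hdisj12) (hy1B i h1) (heq ▸ (hy2B j h2))
    · exact fun heq => (Finset.disjoint_left.1 hdisj12) (hy1B j h2) (heq ▸ hy2B i h1)
    · simp only [hydef, if_neg h1, if_neg h2]
      exact hy₂inj i (Finset.mem_filter.2 ⟨Finset.mem_univ _, h1⟩)
        j (Finset.mem_filter.2 ⟨Finset.mem_univ _, h2⟩) hij hsk
  -- count of y-fibers
  have hfib1 : (univ.filter fun i => tf i ∈ B₂).card ≤ B₂.card * DB := by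
    have := Finset.card_eq_sum_card_fiberwise
      (f := tf) (s := univ.filter fun i => tf i ∈ B₂) (t := B₂)
      (fun i hi => (Finset.mem_filter.1 hi).2)
    rw [this]
    calc ∑ v ∈ B₂, ((univ.filter fun i => tf i ∈ B₂).filter fun i => tf i = v).card
        ≤ ∑ v ∈ B₂, DB := by
          refine Finset.sum_le_sum ?_
          intro v _
          refine le_trans (Finset.card_le_card ?_) (hcntB v)
          exact Finset.filter_subset_filter _ (Finset.filter_subset _ _)
      _ = B₂.card * DB := by rw [Finset.sum_const, smul_eq_mul]
  have hfib2 : (univ.filter fun i => ¬ (tf i ∈ B₂)).card ≤ B₂.card * DB := by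
    have hss : ∀ i ∈ univ.filter fun i => ¬ (tf i ∈ B₂), tf i ∈ B₁ :=
      fun i hi => htf1 i (Finset.mem_filter.1 hi).2
    have := Finset.card_eq_sum_card_fiberwise (f := tf)
      (s := univ.filter fun i => ¬ (tf i ∈ B₂)) (t := B₁) hss
    rw [this]
    calc ∑ v ∈ B₁, ((univ.filter fun i => ¬ (tf i ∈ B₂)).filter fun i => tf i = v).card
        ≤ ∑ v ∈ B₁, DB := by
          refine Finset.sum_le_sum ?_
          intro v _
          refine le_trans (Finset.card_le_card ?_) (hcntB v)
          exact Finset.filter_subset_filter _ (Finset.filter_subset _ _)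
      _ = B₁.card * DB := by rw [Finset.sum_const, smul_eq_mul]
      _ ≤ B₂.card * DB := Nat.mul_le_mul_right _ hq₁₂
  have hcnty : ∀ v, (univ.filter fun i => y i = v).card ≤ MB := by
    intro v
    by_cases hv1 : v ∈ B₁
    · have hEq : (univ.filter fun i => y i = v) =
          ((univ.filter fun i => tf i ∈ B₂).filter fun i => y₁ i = v) := by
        ext i
        simp only [Finset.mem_filter, Finset.mem_univ, true_and]
        constructor
        · intro h
          by_cases h2 : tf i ∈ B₂
          · simp only [hydef, if_pos h2] at h
            exact ⟨h2, h⟩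
          · exfalso
            have := hy2B i h2
            rw [show y i = v from h] at this
            exact (Finset.disjoint_left.1 hdisj12) hv1 this
        · intro ⟨h2, h⟩
          simp only [hydef, if_pos h2]
          exact h
      rw [hEq]
      refine le_trans (hy₁load v) ?_
      rw [hMBdef, Finset.length_toList, hB₁card]
      have h1 : ((univ.filter fun i => tf i ∈ B₂).card - 1) ≤ (B.card - q₁) * DB - 1 := by
        have := hfib1
        rw [hB₂card] at this
        omega
      have := Nat.div_le_div_right (c := q₁) h1
      omega
    · by_cases hv2 : v ∈ B₂
      · have hEq : (univ.filter fun i => y i = v) =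
            ((univ.filter fun i => ¬ (tf i ∈ B₂)).filter fun i => y₂ i = v) := by
          ext i
          simp only [Finset.mem_filter, Finset.mem_univ, true_and]
          constructor
          · intro h
            by_cases h2 : tf i ∈ B₂
            · exfalso
              have := hy1B i h2
              rw [show y i = v from h] at this
              exact (Finset.disjoint_left.1 hdisj12) this hv2
            · simp only [hydef, if_neg h2] at h
              exact ⟨h2, h⟩
          · intro ⟨h2, h⟩
            simp only [hydef, if_neg h2]
            exact h
        rw [hEq]
        refine le_trans (hy₂load v) ?_
        rw [hMBdef, Finset.length_toList]
        have h1 : ((univ.filter fun i => ¬ (tf i ∈ B₂)).card - 1) ≤ (B.card - q₁) * DB - 1 := by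
          have := hfib2
          rw [hB₂card] at this
          omega
        have h2 := Nat.div_le_div_right (c := B₂.card) h1
        have h3 : ((B.card - q₁) * DB - 1) / B₂.card ≤ ((B.card - q₁) * DB - 1) / q₁ := by
          refine Nat.div_le_div_left ?_ (by omega)
          rw [hB₂card]; omega
        omega
      · have hEq : (univ.filter fun i => y i = v) = ∅ := by
          rw [Finset.filter_eq_empty_iff]
          intro i _
          by_cases h2 : tf i ∈ B₂
          · exact fun h => hv1 (h ▸ hy1B i h2)
          · exact fun h => hv2 (h ▸ hy2B i h2)
        rw [hEq]
        simp
  -- the bipartite multigraph H : rows in B₁, columns in B₂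
  set row : Fin n → V := fun i => if tf i ∈ B₂ then y i else tf i with hrowdef
  set col : Fin n → V := fun i => if tf i ∈ B₂ then tf i else y i with hcoldef
  set K := MB + DB with hKdef
  have hrowdeg : ∀ v, (univ.filter fun i => row i = v).card ≤ K := by
    intro v
    have hsub : (univ.filter fun i => row i = v) ⊆
        (univ.filter fun i => y i = v) ∪ (univ.filter fun i => tf i = v) := by
      intro i hi
      rw [Finset.mem_filter] at hi
      by_cases h2 : tf i ∈ B₂
      · refine Finset.mem_union_left _ (Finset.mem_filter.2 ⟨Finset.mem_univ _, ?_⟩)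
        rw [← hi.2]; simp only [hrowdef, if_pos h2]
      · refine Finset.mem_union_right _ (Finset.mem_filter.2 ⟨Finset.mem_univ _, ?_⟩)
        rw [← hi.2]; simp only [hrowdef, if_neg h2]
    refine le_trans (Finset.card_le_card hsub) (le_trans (Finset.card_union_le _ _) ?_)
    rw [hKdef]
    exact Nat.add_le_add (hcnty v) (hcntB v)
  have hcoldeg : ∀ v, (univ.filter fun i => col i = v).card ≤ K := by
    intro v
    have hsub : (univ.filter fun i => col i = v) ⊆
        (univ.filter fun i => y i = v) ∪ (univ.filter fun i => tf i = v) := by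
      intro i hi
      rw [Finset.mem_filter] at hi
      by_cases h2 : tf i ∈ B₂
      · refine Finset.mem_union_right _ (Finset.mem_filter.2 ⟨Finset.mem_univ _, ?_⟩)
        rw [← hi.2]; simp only [hcoldef, if_pos h2]
      · refine Finset.mem_union_left _ (Finset.mem_filter.2 ⟨Finset.mem_univ _, ?_⟩)
        rw [← hi.2]; simp only [hcoldef, if_neg h2]
    refine le_trans (Finset.card_le_card hsub) (le_trans (Finset.card_union_le _ _) ?_)
    rw [hKdef]
    exact Nat.add_le_add (hcnty v) (hcntB v)
  obtain ⟨φ, hφK, hφr, hφc⟩ := exists_proper_coloring n K row col hrowdeg hcoldeg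
  -- color lists
  set P : V → Finset V := fun v => (univ.filter fun j => y j = v).image sf with hPdef
  have hPcard : ∀ v, (P v).card ≤ MB := fun v => le_trans Finset.card_image_le (hcnty v)
  set Λ : Fin n → Finset V := fun i => A \ (P (y i) ∪ P (tf i)) with hΛdef
  have hΛcard : ∀ i, A.card - 2 * MB ≤ (Λ i).card := by
    intro i
    have h1 : (P (y i) ∪ P (tf i)).card ≤ 2 * MB := by
      refine le_trans (Finset.card_union_le _ _) ?_
      have := hPcard (y i); have := hPcard (tf i); omega
    have h2 := Finset.le_card_sdiff (P (y i) ∪ P (tf i)) A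
    simp only [hΛdef]
    omega
  have hApos : 0 < A.card := by omega
  haveI : Nonempty V := by
    obtain ⟨v, -⟩ := Finset.card_pos.1 hApos
    exact ⟨v⟩
  have hsize : ∀ i ∈ (univ : Finset (Fin n)),
      ((univ.filter fun j => j ≠ i ∧ row j = row i ∧ φ i < φ j).card
        + (univ.filter fun j => j ≠ i ∧ col j = col i ∧ φ j < φ i).card) < (Λ i).card := by
    intro i _
    have hU1 : (univ.filter fun j => j ≠ i ∧ row j = row i ∧ φ i < φ j).card ≤ K - 1 - φ i := by
      have : (univ.filter fun j => j ≠ i ∧ row j = row i ∧ φ i < φ j).card ≤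
          (Finset.Ico (φ i + 1) K).card := by
        apply Finset.card_le_card_of_injOn φ
        · intro j hj
          rw [Finset.mem_coe, Finset.mem_filter] at hj
          rw [Finset.mem_coe, Finset.mem_Ico]
          exact ⟨hj.2.2.2, hφK j⟩
        · intro j hj j' hj' heq
          simp only [Finset.coe_filter, Set.mem_setOf_eq] at hj hj'
          by_contra hne
          exact hφr j j' hne (hj.2.2.1.trans hj'.2.2.1.symm) heq
      rw [Nat.card_Ico] at this
      omega
    have hU2 : (univ.filter fun j => j ≠ i ∧ col j = col i ∧ φ j < φ i).card ≤ φ i := by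
      have : (univ.filter fun j => j ≠ i ∧ col j = col i ∧ φ j < φ i).card ≤
          (Finset.range (φ i)).card := by
        apply Finset.card_le_card_of_injOn φ
        · intro j hj
          rw [Finset.mem_coe, Finset.mem_filter] at hj
          rw [Finset.mem_coe, Finset.mem_range]
          exact hj.2.2.2
        · intro j hj j' hj' heq
          simp only [Finset.coe_filter, Set.mem_setOf_eq] at hj hj'
          by_contra hne
          exact hφc j j' hne (hj.2.2.1.trans hj'.2.2.1.symm) heq
      rw [Finset.card_range] at this
      omega
    have hφKi := hφK i
    have hΛi := hΛcard i
    rw [hKdef] at hU1 hφKi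
    rw [hMBdef] at *
    omega
  obtain ⟨x, hxmem, hxprop⟩ := listcolor row col φ hφr hφc univ Λ hsize
  have hxΛ : ∀ i, x i ∈ Λ i := fun i => hxmem i (Finset.mem_univ i)
  have hxA : ∀ i, x i ∈ A := by
    intro i
    have := hxΛ i
    simp only [hΛdef] at this
    exact (Finset.mem_sdiff.1 this).1
  have hX3 : ∀ i j, (y j = y i ∨ y j = tf i) → x i ≠ sf j := by
    intro i j hcase heq
    have := hxΛ i
    simp only [hΛdef, Finset.mem_sdiff] at this
    refine this.2 ?_
    rcases hcase with h | h
    · exact Finset.mem_union_left _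
        (Finset.mem_image.2 ⟨j, Finset.mem_filter.2 ⟨Finset.mem_univ _, h⟩, heq.symm⟩)
    · exact Finset.mem_union_right _
        (Finset.mem_image.2 ⟨j, Finset.mem_filter.2 ⟨Finset.mem_univ _, h⟩, heq.symm⟩)
  have hX2 : ∀ i j, i ≠ j → (y i = y j ∨ y i = tf j ∨ tf i = y j ∨ tf i = tf j) → x i ≠ x j := by
    intro i j hij hcase
    have hshare : row i = row j ∨ col i = col j := by
      rcases hcase with h | h | h | h
      · by_cases h1 : tf i ∈ B₂ <;> by_cases h2 : tf j ∈ B₂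
        · left; simp only [hrowdef, if_pos h1, if_pos h2]; exact h
        · exact absurd (h ▸ hy2B j h2) (Finset.disjoint_left.1 hdisj12 (hy1B i h1))
        · exact absurd (h.symm ▸ hy2B i h1) (Finset.disjoint_left.1 hdisj12 (hy1B j h2))
        · right; simp only [hcoldef, if_neg h1, if_neg h2]; exact h
      · by_cases h1 : tf i ∈ B₂ <;> by_cases h2 : tf j ∈ B₂
        · exact absurd h2 (Finset.disjoint_left.1 hdisj12 (h ▸ hy1B i h1))
        · left; simp only [hrowdef, if_pos h1, if_neg h2]; exact h
        · right; simp only [hcoldef, if_neg h1, if_pos h2]; exact h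
        · exact absurd (htf1 j h2) (fun hh => Finset.disjoint_left.1 hdisj12 hh (h ▸ hy2B i h1))
      · by_cases h1 : tf i ∈ B₂ <;> by_cases h2 : tf j ∈ B₂
        · exact absurd (h ▸ h1) (Finset.disjoint_left.1 hdisj12 (hy1B j h2))
        · right; simp only [hcoldef, if_pos h1, if_neg h2]; exact h
        · left; simp only [hrowdef, if_neg h1, if_pos h2]; exact h
        · exact absurd (htf1 i h1) (fun hh => Finset.disjoint_left.1 hdisj12 hh (h.symm ▸ hy2B j h2))
      · by_cases h1 : tf i ∈ B₂ <;> by_cases h2 : tf j ∈ B₂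
        · right; simp only [hcoldef, if_pos h1, if_pos h2]; exact h
        · exact absurd (h ▸ h1) (fun hh => h2 hh)
        · exact absurd (h.symm ▸ h2) (fun hh => h1 hh)
        · left; simp only [hrowdef, if_neg h1, if_neg h2]; exact h
    exact hxprop i (Finset.mem_univ _) j (Finset.mem_univ _) hij hshare
  exact ⟨y, x, hyB, hxA, hynott, hY2, hX2, hX3⟩
end Construction

lemma numeric_core (ε aR bR dB q M0 : ℝ) (hε0 : 0 < ε) (hε1 : ε < 1)
    (hεa : 8 ≤ ε * aR) (hεb1 : 8 ≤ ε * (bR - 1)) (hb2 : 2 ≤ bR)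
    (hdB : dB ≤ (1 - ε) * aR / 4) (hdBnn : 0 ≤ dB) (hM0nn : 0 ≤ M0)
    (hq1 : bR - 1 ≤ 2 * q) (hq2' : 2 * q ≤ bR)
    (hMq : M0 * q ≤ (bR - q) * dB) :
    3 * (M0 + 1) + dB + 1 ≤ aR := by
  have haR : 0 < aR := by nlinarith
  have hb1 : 0 < bR - 1 := by linarith
  have h1 : M0 * (bR - 1) ≤ M0 * (2 * q) := mul_le_mul_of_nonneg_left hq1 hM0nn
  have h4 : bR - q ≤ (bR + 1) / 2 := by linarith
  have h5 : (bR - q) * dB ≤ ((bR + 1) / 2) * dB := mul_le_mul_of_nonneg_right h4 hdBnn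
  have hM0R : M0 * (bR - 1) ≤ (bR + 1) * dB := by nlinarith
  have hM1 : (M0 - dB) * (bR - 1) ≤ 2 * dB := by nlinarith
  have hdBa4 : dB ≤ aR / 4 := by nlinarith
  have hhalf : 2 * dB ≤ aR / 2 := by linarith
  have hEps : aR / 2 ≤ (ε * aR / 16) * (bR - 1) := by nlinarith
  have hM2 : M0 - dB ≤ ε * aR / 16 := by
    have hcomb : (M0 - dB) * (bR - 1) ≤ (ε * aR / 16) * (bR - 1) := by linarith
    exact le_of_mul_le_mul_right hcomb hb1
  nlinarith

/-- Theorem 2 of the paper: for every `ε ∈ (0,1)` there is `N`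
such that every bipartite demand graph on classes `A`, `B` of sizes `≥ N` with
all degrees in `A` at most `(1-ε)|B|/4` and all degrees in `B` at most
`(1-ε)|A|/4` is resolvable in the complete bipartite graph `K_{A,B}`. -/
theorem degree_version (ε : ℝ) (hε0 : 0 < ε) (hε1 : ε < 1) :
    ∃ N : ℕ, ∀ (V : Type) [DecidableEq V] (A B : Finset V)
      (D : Multiset (Sym2 V)),
      Disjoint A B → N ≤ A.card → N ≤ B.card →
      IsBipartiteDemand A B D →
      (∀ x ∈ A, (demandDegree D x : ℝ) ≤ (1 - ε) * (B.card : ℝ) / 4) →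
      (∀ y ∈ B, (demandDegree D y : ℝ) ≤ (1 - ε) * (A.card : ℝ) / 4) →
      IsResolvable (completeBipartite A B) D := by
  refine ⟨⌈(8:ℝ)/ε⌉₊ + 2, ?_⟩
  intro V _ A B D hdisj hA hB hBD hdegA hdegB
  classical
  -- index the demands
  set n := D.toList.length with hn
  set edge : Fin n → Sym2 V := fun i => D.toList.get i with hedge
  have hedgeD : ∀ i, edge i ∈ D := fun i => by
    rw [← Multiset.mem_toList]; exact List.get_mem _ _
  have hchoice : ∀ i : Fin n, ∃ p : V × V, p.1 ∈ A ∧ p.2 ∈ B ∧ edge i = s(p.1, p.2) := by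
    intro i
    obtain ⟨xx, hx, yy, hy, hxy⟩ := hBD (edge i) (hedgeD i)
    exact ⟨(xx, yy), hx, hy, hxy⟩
  choose pf hpA hpB hpe using hchoice
  set sf : Fin n → V := fun i => (pf i).1 with hsfdef
  set tf : Fin n → V := fun i => (pf i).2 with htfdef
  have hDmap : Multiset.map edge (univ : Finset (Fin n)).val = D := by
    have h1 : (univ : Finset (Fin n)).val = ↑(List.finRange n) := rfl
    rw [h1]
    have h2 : Multiset.map edge ↑(List.finRange n) = ↑((List.finRange n).map edge) := rfl
    rw [h2]
    have h3 : (List.finRange n).map edge = D.toList := List.map_get_finRange D.toList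
    rw [h3, Multiset.coe_toList]
  have hdd : ∀ v, demandDegree D v = (univ.filter fun i => v ∈ edge i).card := by
    intro v
    calc demandDegree D v = Multiset.countP (fun e => v ∈ e) D :=
          (Multiset.countP_eq_card_filter _ _).symm
      _ = Multiset.countP (fun e => v ∈ e) (Multiset.map edge (univ : Finset (Fin n)).val) := by
          rw [hDmap]
      _ = Multiset.card (Multiset.filter (fun i => v ∈ edge i) (univ : Finset (Fin n)).val) := by
          rw [Multiset.countP_map]
      _ = (univ.filter fun i => v ∈ edge i).card := rfl
  -- degree bounds
  set DA := ⌊(1 - ε) * (B.card : ℝ) / 4⌋₊ with hDAdef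
  set DB := ⌊(1 - ε) * (A.card : ℝ) / 4⌋₊ with hDBdef
  have hcntA : ∀ v, (univ.filter fun i => sf i = v).card ≤ DA := by
    intro v
    by_cases hv : v ∈ A
    · have h1 : (univ.filter fun i => sf i = v) ⊆ (univ.filter fun i => v ∈ edge i) := by
        intro i hi
        rw [Finset.mem_filter] at hi ⊢
        refine ⟨hi.1, ?_⟩
        rw [hpe i, ← hi.2]
        exact Sym2.mem_mk_left _ _
      refine le_trans (Finset.card_le_card h1) ?_
      rw [← hdd]
      exact Nat.le_floor (hdegA v hv)
    · have h1 : (univ.filter fun i => sf i = v) = ∅ := by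
        rw [Finset.filter_eq_empty_iff]
        intro i _ h
        exact hv (h ▸ hpA i)
      rw [h1]; simp
  have hcntB : ∀ v, (univ.filter fun i => tf i = v).card ≤ DB := by
    intro v
    by_cases hv : v ∈ B
    · have h1 : (univ.filter fun i => tf i = v) ⊆ (univ.filter fun i => v ∈ edge i) := by
        intro i hi
        rw [Finset.mem_filter] at hi ⊢
        refine ⟨hi.1, ?_⟩
        rw [hpe i, ← hi.2]
        exact Sym2.mem_mk_right _ _
      refine le_trans (Finset.card_le_card h1) ?_
      rw [← hdd]
      exact Nat.le_floor (hdegB v hv)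
    · have h1 : (univ.filter fun i => tf i = v) = ∅ := by
        rw [Finset.filter_eq_empty_iff]
        intro i _ h
        exact hv (h ▸ hpB i)
      rw [h1]; simp
  -- numeric facts
  have hNle : ((8:ℝ)/ε) ≤ (⌈(8:ℝ)/ε⌉₊ : ℝ) := Nat.le_ceil _
  have haC : ((⌈(8:ℝ)/ε⌉₊ : ℝ) + 2) ≤ (A.card : ℝ) := by
    have : ((⌈(8:ℝ)/ε⌉₊ + 2 : ℕ) : ℝ) ≤ (A.card : ℝ) := Nat.cast_le.2 hA
    push_cast at this
    linarith
  have hbC : ((⌈(8:ℝ)/ε⌉₊ : ℝ) + 2) ≤ (B.card : ℝ) := by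
    have : ((⌈(8:ℝ)/ε⌉₊ + 2 : ℕ) : ℝ) ≤ (B.card : ℝ) := Nat.cast_le.2 hB
    push_cast at this
    linarith
  have ha8 : (8:ℝ)/ε + 2 ≤ (A.card : ℝ) := by linarith
  have hb8 : (8:ℝ)/ε + 2 ≤ (B.card : ℝ) := by linarith
  have hεa : (8:ℝ) ≤ ε * (A.card : ℝ) := by
    have h1 : (8:ℝ)/ε ≤ (A.card:ℝ) := by linarith
    calc (8:ℝ) = ε * ((8:ℝ)/ε) := by field_simp
      _ ≤ ε * (A.card:ℝ) := by
          exact mul_le_mul_of_nonneg_left h1 (le_of_lt hε0)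
  have hεb1 : (8:ℝ) ≤ ε * ((B.card : ℝ) - 1) := by
    have h1 : (8:ℝ)/ε ≤ (B.card:ℝ) - 1 := by linarith
    calc (8:ℝ) = ε * ((8:ℝ)/ε) := by field_simp
      _ ≤ ε * ((B.card:ℝ) - 1) := by
          exact mul_le_mul_of_nonneg_left h1 (le_of_lt hε0)
  have hb2 : 2 ≤ B.card := by omega
  have hbR2 : (2:ℝ) ≤ (B.card : ℝ) := by exact_mod_cast hb2
  have hDAr : (DA : ℝ) ≤ (1 - ε) * (B.card : ℝ) / 4 := by
    rw [hDAdef]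
    apply Nat.floor_le
    have : (0:ℝ) ≤ (1 - ε) := by linarith
    positivity
  have hDBr : (DB : ℝ) ≤ (1 - ε) * (A.card : ℝ) / 4 := by
    rw [hDBdef]
    apply Nat.floor_le
    have : (0:ℝ) ≤ (1 - ε) := by linarith
    positivity
  have hq2 : (B.card : ℝ) ≤ 2 * ((B.card / 2 : ℕ) : ℝ) + 1 := by
    have : B.card ≤ 2 * (B.card / 2) + 1 := by omega
    exact_mod_cast this
  have hDAq : DA ≤ B.card / 2 := by
    rw [← Nat.cast_le (α := ℝ)]
    have hεbnn : (0:ℝ) ≤ ε * (B.card:ℝ) :=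
      mul_nonneg (le_of_lt hε0) (Nat.cast_nonneg _)
    linarith
  have hnum : 3 * (((B.card - B.card / 2) * DB - 1) / (B.card / 2) + 1) + DB + 1 ≤ A.card := by
    set q : ℕ := B.card / 2 with hqdef
    set T : ℕ := (B.card - q) * DB - 1 with hTdef
    set M₀ : ℕ := T / q with hM₀def
    have hqb : q ≤ B.card := Nat.div_le_self _ _
    have hMq : M₀ * q ≤ (B.card - q) * DB := le_trans (Nat.div_mul_le_self T q) (by omega)
    have hMqR : (M₀ : ℝ) * (q:ℝ) ≤ ((B.card:ℝ) - (q:ℝ)) * (DB:ℝ) := by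
      have h := (Nat.cast_le (α := ℝ)).2 hMq
      push_cast [Nat.cast_sub hqb] at h
      exact_mod_cast h
    have h2qb : (B.card:ℝ) - 1 ≤ 2*(q:ℝ) := by
      have h : B.card ≤ 2*q + 1 := by omega
      have := (Nat.cast_le (α := ℝ)).2 h
      push_cast at this
      linarith
    have h2qb' : 2*(q:ℝ) ≤ (B.card:ℝ) := by
      have h : 2*q ≤ B.card := by omega
      exact_mod_cast h
    have hcore := numeric_core ε (A.card:ℝ) (B.card:ℝ) (DB:ℝ) (q:ℝ) (M₀:ℝ) hε0 hε1 hεa hεb1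
      hbR2 hDBr (Nat.cast_nonneg _) (Nat.cast_nonneg _) h2qb h2qb' hMqR
    rw [← Nat.cast_le (α := ℝ)]
    push_cast
    linarith
  obtain ⟨y, x, hyB, hxA, hyt, hY2, hX2, hX3⟩ :=
    main_construction A B hdisj n sf tf hpA hpB DA DB hcntA hcntB hb2 hDAq hnum
  -- assemble the paths
  have hAB_ne : ∀ u w, u ∈ A → w ∈ B → u ≠ w := fun u w hu hw he =>
    (Finset.disjoint_left.1 hdisj hu) (he ▸ hw)
  have hadj1 : ∀ u w, u ∈ A → w ∈ B → (completeBipartite A B).Adj u w :=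
    fun u w hu hw => (⟨hAB_ne u w hu hw, Or.inl ⟨hu, hw⟩⟩ : u ≠ w ∧ ((u ∈ A ∧ w ∈ B) ∨ (u ∈ B ∧ w ∈ A)))
  have hadj2 : ∀ u w, u ∈ B → w ∈ A → (completeBipartite A B).Adj u w :=
    fun u w hu hw => (⟨fun he => hAB_ne w u hw hu he.symm, Or.inr ⟨hu, hw⟩⟩ : u ≠ w ∧ ((u ∈ A ∧ w ∈ B) ∨ (u ∈ B ∧ w ∈ A)))
  set wk : ∀ i : Fin n, (completeBipartite A B).Walk (sf i) (tf i) := fun i =>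
    SimpleGraph.Walk.cons (hadj1 (sf i) (y i) (hpA i) (hyB i))
      (SimpleGraph.Walk.cons (hadj2 (y i) (x i) (hyB i) (hxA i))
        (SimpleGraph.Walk.cons (hadj1 (x i) (tf i) (hxA i) (hpB i))
          SimpleGraph.Walk.nil)) with hwkdef
  have hedges : ∀ k, (wk k).edges = [s(sf k, y k), s(y k, x k), s(x k, tf k)] := by
    intro k
    simp [hwkdef]
  have hsym2 : ∀ u₁ v₁ u₂ v₂ : V, u₁ ∈ A → v₁ ∈ B → u₂ ∈ A → v₂ ∈ B →
      s(u₁, v₁) = s(u₂, v₂) → u₁ = u₂ ∧ v₁ = v₂ := by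
    intro u₁ v₁ u₂ v₂ hu₁ hv₁ hu₂ hv₂ h
    rw [Sym2.eq_iff] at h
    rcases h with ⟨h1, h2⟩ | ⟨h1, h2⟩
    · exact ⟨h1, h2⟩
    · exact absurd h1 (hAB_ne u₁ v₂ hu₁ hv₂)
  refine ⟨(List.finRange n).map (fun i => ⟨sf i, tf i, wk i⟩), ?_, ?_, ?_⟩
  · -- multiset equality
    rw [List.map_map]
    have h1 : ((fun (p : (u : V) × (v : V) × (completeBipartite A B).Walk u v) => s(p.1, p.2.1))
        ∘ (fun i => (⟨sf i, tf i, wk i⟩ : (u : V) × (v : V) × (completeBipartite A B).Walk u v)))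
        = fun i => s(sf i, tf i) := rfl
    rw [h1]
    have h2 : ((List.finRange n).map (fun i => s(sf i, tf i))) = (List.finRange n).map edge := by
      apply List.map_congr_left
      intro i _
      exact (hpe i).symm
    rw [h2]
    have h3 : (List.finRange n).map edge = D.toList := List.map_get_finRange D.toList
    rw [h3, Multiset.coe_toList]
  · -- paths
    intro p hp
    rw [List.mem_map] at hp
    obtain ⟨i, -, rfl⟩ := hp
    show (wk i).IsPath
    have n1 : sf i ≠ y i := hAB_ne _ _ (hpA i) (hyB i)
    have n2 : sf i ≠ x i := (hX3 i i (Or.inl rfl)).symm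
    have n3 : sf i ≠ tf i := hAB_ne _ _ (hpA i) (hpB i)
    have n4 : y i ≠ x i := fun h => hAB_ne _ _ (hxA i) (hyB i) h.symm
    have n5 : y i ≠ tf i := hyt i
    have n6 : x i ≠ tf i := hAB_ne _ _ (hxA i) (hpB i)
    rw [SimpleGraph.Walk.isPath_def, hwkdef]
    simp [List.nodup_cons, n1, n2, n3, n4, n5, n6]
  · -- pairwise edge-disjoint
    rw [List.pairwise_map]
    refine List.Pairwise.imp ?_ (List.pairwise_lt_finRange n)
    intro i j hij
    have hne : i ≠ j := Fin.ne_of_lt hij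
    intro e he hej
    rw [hedges i] at he
    rw [hedges j] at hej
    simp only [List.mem_cons, List.not_mem_nil, or_false] at he hej
    have hmidi : s(y i, x i) = s(x i, y i) := Sym2.eq_swap
    have hmidj : s(y j, x j) = s(x j, y j) := Sym2.eq_swap
    rcases he with rfl | rfl | rfl
    · rcases hej with h | h | h
      · obtain ⟨e1, e2⟩ := hsym2 _ _ _ _ (hpA i) (hyB i) (hpA j) (hyB j) h
        exact hY2 i j hne e1 e2
      · rw [hmidj] at h
        obtain ⟨e1, e2⟩ := hsym2 _ _ _ _ (hpA i) (hyB i) (hxA j) (hyB j) h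
        exact hX3 j i (Or.inl e2) e1.symm
      · obtain ⟨e1, e2⟩ := hsym2 _ _ _ _ (hpA i) (hyB i) (hxA j) (hpB j) h
        exact hX3 j i (Or.inr e2) e1.symm
    · rw [hmidi] at hej
      rcases hej with h | h | h
      · obtain ⟨e1, e2⟩ := hsym2 _ _ _ _ (hxA i) (hyB i) (hpA j) (hyB j) h
        exact hX3 i j (Or.inl e2.symm) e1
      · rw [hmidj] at h
        obtain ⟨e1, e2⟩ := hsym2 _ _ _ _ (hxA i) (hyB i) (hxA j) (hyB j) h
        exact hX2 i j hne (Or.inl e2) e1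
      · obtain ⟨e1, e2⟩ := hsym2 _ _ _ _ (hxA i) (hyB i) (hxA j) (hpB j) h
        exact hX2 i j hne (Or.inr (Or.inl e2)) e1
    · rcases hej with h | h | h
      · obtain ⟨e1, e2⟩ := hsym2 _ _ _ _ (hxA i) (hpB i) (hpA j) (hyB j) h
        exact hX3 i j (Or.inr e2.symm) e1
      · rw [hmidj] at h
        obtain ⟨e1, e2⟩ := hsym2 _ _ _ _ (hxA i) (hpB i) (hxA j) (hyB j) h
        exact hX2 i j hne (Or.inr (Or.inr (Or.inl e2))) e1
      · obtain ⟨e1, e2⟩ := hsym2 _ _ _ _ (hxA i) (hpB i) (hxA j) (hpB j) h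
        exact hX2 i j hne (Or.inr (Or.inr (Or.inr e2))) e1
end

section
/- Let n ≥ 2 and let A = {a₁, …, aₙ} and B = {b₁, …, bₙ} be disjoint sets of size n. Let D be the demand graph on (A, B) consisting of n parallel demand edges joining a₁ and b₁, n − 1 parallel demand edges joining a₂ and b₂, and no other demand edges (so D has 2n − 1 demand edges and Δ(D) = n). Then D is not resolvable in the complete bipartite graph K_{A,B}. -/
variable {V : Type*}

private lemma countP_flatMap_aux {α β : Type*} (p : β → Bool) (l : List α) (f : α → List β) :
    (l.flatMap f).countP p = (l.map fun x => (f x).countP p).sum := by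
  induction l with
  | nil => simp
  | cons x xs ih => simp [List.flatMap_cons, List.countP_append, ih]

private lemma count_le_of_nodup [DecidableEq V] (v : V) (S : Finset V) (L : List (Sym2 V))
    (hnd : L.Nodup) (h : ∀ e ∈ L, v ∈ e → ∃ w ∈ S, e = s(v, w)) :
    L.countP (fun e => v ∈ e) ≤ S.card := by
  rw [List.countP_eq_length_filter]
  have hnd' : (L.filter (fun e => v ∈ e)).Nodup := hnd.filter _
  rw [← List.toFinset_card_of_nodup hnd']
  have hsub : (L.filter (fun e => v ∈ e)).toFinset ⊆ S.image (fun w => s(v, w)) := by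
    intro e he
    simp only [List.mem_toFinset, List.mem_filter, decide_eq_true_eq] at he
    obtain ⟨w, hw, rfl⟩ := h e he.1 he.2
    exact Finset.mem_image_of_mem _ hw
  exact le_trans (Finset.card_le_card hsub) Finset.card_image_le

private lemma one_le_countP_of_endpoint [DecidableEq V] {G : SimpleGraph V} {u v : V}
    {w : G.Walk u v} (ht : w.IsTrail) (huv : u ≠ v) (x : V) (hx : x = u ∨ x = v) :
    1 ≤ w.edges.countP (fun e => x ∈ e) := by
  by_contra h
  have h0 : w.edges.countP (fun e => x ∈ e) = 0 := by omega
  have he := (ht.even_countP_edges_iff x).mp (by rw [h0]; exact Even.zero)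
  rcases hx with rfl | rfl
  · exact (he huv).1 rfl
  · exact (he huv).2 rfl

private lemma two_le_countP_of_internal [DecidableEq V] {G : SimpleGraph V} {u v : V}
    {w : G.Walk u v} (ht : w.IsTrail) (x : V) (hxu : x ≠ u) (hxv : x ≠ v)
    (e : Sym2 V) (he : e ∈ w.edges) (hxe : x ∈ e) :
    2 ≤ w.edges.countP (fun e => x ∈ e) := by
  have hev : Even (w.edges.countP (fun e => x ∈ e)) :=
    (ht.even_countP_edges_iff x).mpr (fun _ => ⟨hxu, hxv⟩)
  have hpos : 0 < w.edges.countP (fun e => x ∈ e) :=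
    List.countP_pos_iff.mpr ⟨e, he, by simpa using hxe⟩
  obtain ⟨k, hk⟩ := hev
  omega

/-- sharpness of Theorem 4: the demand graph with `n` parallel
edges joining `a₁b₁` and `n - 1` parallel edges joining `a₂b₂` (and `2n - 4`
isolated vertices) is not resolvable in `K_{n,n}`. -/
theorem edge_version_sharp [DecidableEq V] (n : ℕ) (hn : 2 ≤ n)
    (a b : Fin n → V) (ha : Function.Injective a) (hb : Function.Injective b)
    (hab : ∀ i j, a i ≠ b j) :
    ¬ IsResolvable
        (completeBipartite (Finset.univ.image a) (Finset.univ.image b))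
        (Multiset.replicate n s(a ⟨0, by omega⟩, b ⟨0, by omega⟩) +
          Multiset.replicate (n - 1) s(a ⟨1, by omega⟩, b ⟨1, by omega⟩)) := by
  intro hres
  have h0 : (0 : ℕ) < n := by omega
  have h1 : (1 : ℕ) < n := by omega
  set A : Finset V := Finset.univ.image a with hA
  set B : Finset V := Finset.univ.image b with hB
  set G : SimpleGraph V := completeBipartite A B with hG
  set a1 : V := a ⟨0, h0⟩ with ha1
  set a2 : V := a ⟨1, h1⟩ with ha2
  set b1 : V := b ⟨0, h0⟩ with hb1
  set b2 : V := b ⟨1, h1⟩ with hb2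
  have h01 : (⟨0, h0⟩ : Fin n) ≠ ⟨1, h1⟩ := by simp [Fin.ext_iff]
  have ha12 : a1 ≠ a2 := fun h => h01 (ha h)
  have hb12 : b1 ≠ b2 := fun h => h01 (hb h)
  have hab11 : a1 ≠ b1 := hab _ _
  have hab12 : a1 ≠ b2 := hab _ _
  have hab21 : a2 ≠ b1 := hab _ _
  have hab22 : a2 ≠ b2 := hab _ _
  set e₁ : Sym2 V := s(a1, b1) with he₁
  set e₂ : Sym2 V := s(a2, b2) with he₂
  have he12 : e₁ ≠ e₂ := by
    intro hcon
    rcases Sym2.eq_iff.mp hcon with ⟨h, -⟩ | ⟨h, -⟩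
    · exact ha12 h
    · exact hab12 h
  obtain ⟨l, hmap, hpath, hpair⟩ := hres
  have hmap' : ((l.map fun p => s(p.1, p.2.1)) : Multiset (Sym2 V)) =
      Multiset.replicate n e₁ + Multiset.replicate (n - 1) e₂ := hmap
  -- class membership in each side
  have ha1A : a1 ∈ A := Finset.mem_image_of_mem a (Finset.mem_univ _)
  have hb2B : b2 ∈ B := Finset.mem_image_of_mem b (Finset.mem_univ _)
  have ha1B : a1 ∉ B := by
    rw [hB]
    simp only [Finset.mem_image, Finset.mem_univ, true_and]
    rintro ⟨j, hj⟩
    exact hab _ j hj.symm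
  have hb2A : b2 ∉ A := by
    rw [hA]
    simp only [Finset.mem_image, Finset.mem_univ, true_and]
    rintro ⟨i, hi⟩
    exact hab i _ hi
  have hcardA : A.card = n := by
    rw [hA, Finset.card_image_of_injective _ ha, Finset.card_univ, Fintype.card_fin]
  have hcardB : B.card = n := by
    rw [hB, Finset.card_image_of_injective _ hb, Finset.card_univ, Fintype.card_fin]
  -- the concatenated list of all edges of the paths
  set L : List (Sym2 V) := l.flatMap (fun p => p.2.2.edges) with hL
  have hLnd : L.Nodup := by
    rw [hL, List.nodup_flatMap]
    exact ⟨fun p hp => ((hpath p hp).isTrail).edges_nodup,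
      hpair.imp (fun h e he1 he2 => h e he1 he2)⟩
  have hLedge : ∀ e ∈ L, e ∈ G.edgeSet := by
    intro e he
    rw [hL, List.mem_flatMap] at he
    obtain ⟨p, _, he⟩ := he
    exact p.2.2.edges_subset_edgeSet he
  -- edges at a1 go to B, edges at b2 go to A
  have hnbrA : ∀ e ∈ L, a1 ∈ e → ∃ w ∈ B, e = s(a1, w) := by
    intro e he hv
    obtain ⟨w, rfl⟩ := Sym2.mem_iff_exists.mp hv
    refine ⟨w, ?_, rfl⟩
    have hadj : G.Adj a1 w := hLedge _ he
    rcases hadj.2 with ⟨-, hw⟩ | ⟨h, -⟩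
    · exact hw
    · exact absurd h ha1B
  have hnbrB : ∀ e ∈ L, b2 ∈ e → ∃ w ∈ A, e = s(b2, w) := by
    intro e he hv
    obtain ⟨w, rfl⟩ := Sym2.mem_iff_exists.mp hv
    refine ⟨w, ?_, rfl⟩
    have hadj : G.Adj b2 w := hLedge _ he
    rcases hadj.2 with ⟨h, -⟩ | ⟨-, hw⟩
    · exact absurd h hb2A
    · exact hw
  -- counting function
  set cnt : V → ((u : V) × (v : V) × G.Walk u v) → ℕ :=
    fun v p => p.2.2.edges.countP (fun e => v ∈ e) with hcnt
  have hflat : ∀ v : V, L.countP (fun e => v ∈ e) = (l.map (cnt v)).sum := by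
    intro v
    rw [hL]
    exact countP_flatMap_aux _ _ _
  -- multiset of paths, split by demand
  set M : Multiset ((u : V) × (v : V) × G.Walk u v) := (↑l : Multiset ((u : V) × (v : V) × G.Walk u v)) with hM
  set dem : ((u : V) × (v : V) × G.Walk u v) → Sym2 V := fun p => s(p.1, p.2.1) with hdem
  have hdemcases : ∀ p ∈ M, dem p = e₁ ∨ dem p = e₂ := by
    intro p hp
    have : dem p ∈ Multiset.replicate n e₁ + Multiset.replicate (n - 1) e₂ := by
      rw [← hmap']
      exact Multiset.mem_map_of_mem _ hp
    rw [Multiset.mem_add] at this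
    rcases this with h | h
    · exact Or.inl (Multiset.eq_of_mem_replicate h)
    · exact Or.inr (Multiset.eq_of_mem_replicate h)
  set M₁ : Multiset _ := M.filter (fun p => dem p = e₁) with hM₁
  set M₂ : Multiset _ := M.filter (fun p => ¬ dem p = e₁) with hM₂
  have hM1card : Multiset.card M₁ = n := by
    have h1 := Multiset.count_map dem M e₁
    have h2 : (M.map dem).count e₁ = n := by
      rw [hM, Multiset.map_coe, hmap', Multiset.count_add, Multiset.count_replicate,
        Multiset.count_replicate, if_pos rfl, if_neg he12.symm]
      omega
    rw [hM₁, Multiset.filter_congr (q := fun p => e₁ = dem p) (fun p _ => eq_comm), ← h1, h2]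
  have hM2card : Multiset.card M₂ = n - 1 := by
    have h1 := Multiset.count_map dem M e₂
    have h2 : (M.map dem).count e₂ = n - 1 := by
      rw [hM, Multiset.map_coe, hmap', Multiset.count_add, Multiset.count_replicate,
        Multiset.count_replicate, if_pos rfl, if_neg he12]
      omega
    rw [hM₂, Multiset.filter_congr (q := fun p => e₂ = dem p) ?_, ← h1, h2]
    intro p hp
    constructor
    · intro h
      rcases hdemcases p hp with h' | h'
      · exact absurd h' h
      · exact h'.symm
    · intro h h'
      exact he12 (h'.symm.trans h.symm)
  have hMsplit : M₁ + M₂ = M := Multiset.filter_add_not _ _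
  have hsplit : ∀ v : V, (l.map (cnt v)).sum =
      (M₁.map (cnt v)).sum + (M₂.map (cnt v)).sum := by
    intro v
    rw [← Multiset.sum_add, ← Multiset.map_add, hMsplit, hM, Multiset.map_coe,
      Multiset.sum_coe]
  -- per-path lower bounds
  have hmem_l : ∀ p, p ∈ M → p ∈ l := fun p hp => hp
  have hends1 : ∀ p ∈ M₁, (p.1 = a1 ∧ p.2.1 = b1) ∨ (p.1 = b1 ∧ p.2.1 = a1) := by
    intro p hp
    have := (Multiset.mem_filter.mp hp).2
    rw [hdem] at this
    exact Sym2.eq_iff.mp this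
  have hends2 : ∀ p ∈ M₂, (p.1 = a2 ∧ p.2.1 = b2) ∨ (p.1 = b2 ∧ p.2.1 = a2) := by
    intro p hp
    have hpM := (Multiset.mem_filter.mp hp).1
    have hne := (Multiset.mem_filter.mp hp).2
    have h2 : dem p = e₂ := by
      rcases hdemcases p hpM with h | h
      · exact absurd h hne
      · exact h
    rw [hdem] at h2
    exact Sym2.eq_iff.mp h2
  have h1a : ∀ p ∈ M₁, 1 ≤ cnt a1 p := by
    intro p hp
    have ht := (hpath p (hmem_l p (Multiset.mem_filter.mp hp).1)).isTrail
    rcases hends1 p hp with ⟨h1, h2⟩ | ⟨h1, h2⟩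
    · exact one_le_countP_of_endpoint ht
        (fun hc => hab11 ((h1.symm.trans hc).trans h2)) a1 (Or.inl h1.symm)
    · exact one_le_countP_of_endpoint ht
        (fun hc => hab11 (((h1.symm.trans hc).trans h2).symm)) a1 (Or.inr h2.symm)
  have h2b : ∀ p ∈ M₂, 1 ≤ cnt b2 p := by
    intro p hp
    have ht := (hpath p (hmem_l p (Multiset.mem_filter.mp hp).1)).isTrail
    rcases hends2 p hp with ⟨h1, h2⟩ | ⟨h1, h2⟩
    · exact one_le_countP_of_endpoint ht
        (fun hc => hab22 ((h1.symm.trans hc).trans h2)) b2 (Or.inr h2.symm)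
    · exact one_le_countP_of_endpoint ht
        (fun hc => hab22 (((h1.symm.trans hc).trans h2).symm)) b2 (Or.inl h1.symm)
  -- sums over the classes
  have hsum1 : n ≤ (M₁.map (cnt a1)).sum := by
    have := Multiset.card_nsmul_le_sum (s := M₁.map (cnt a1)) (a := 1) ?_
    · rwa [Multiset.card_map, hM1card, smul_eq_mul, mul_one] at this
    · intro x hx
      obtain ⟨p, hp, rfl⟩ := Multiset.mem_map.mp hx
      exact h1a p hp
  have hsum2 : n - 1 ≤ (M₂.map (cnt b2)).sum := by
    have := Multiset.card_nsmul_le_sum (s := M₂.map (cnt b2)) (a := 1) ?_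
    · rwa [Multiset.card_map, hM2card, smul_eq_mul, mul_one] at this
    · intro x hx
      obtain ⟨p, hp, rfl⟩ := Multiset.mem_map.mp hx
      exact h2b p hp
  -- global upper bounds
  have hub_a1 : L.countP (fun e => a1 ∈ e) ≤ n := by
    rw [← hcardB]
    exact count_le_of_nodup a1 B L hLnd hnbrA
  have hub_b2 : L.countP (fun e => b2 ∈ e) ≤ n := by
    rw [← hcardA]
    exact count_le_of_nodup b2 A L hLnd hnbrB
  -- the edge s(a1, b2) must be used by some path
  have hkey : ∃ p ∈ M, s(a1, b2) ∈ p.2.2.edges := by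
    by_contra h
    push_neg at h
    have hnbrA' : ∀ e ∈ L, a1 ∈ e → ∃ w ∈ B.erase b2, e = s(a1, w) := by
      intro e he hv
      obtain ⟨w, hw, rfl⟩ := hnbrA e he hv
      refine ⟨w, Finset.mem_erase.mpr ⟨?_, hw⟩, rfl⟩
      rintro rfl
      rw [hL, List.mem_flatMap] at he
      obtain ⟨p, hp, he⟩ := he
      exact h p hp he
    have hub' : L.countP (fun e => a1 ∈ e) ≤ n - 1 := by
      have := count_le_of_nodup a1 (B.erase b2) L hLnd hnbrA'
      rwa [Finset.card_erase_of_mem hb2B, hcardB] at this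
    have hlb : n ≤ L.countP (fun e => a1 ∈ e) := by
      rw [hflat a1, hsplit a1]
      exact le_trans hsum1 (Nat.le_add_right _ _)
    omega
  obtain ⟨p₀, hp₀M, hp₀e⟩ := hkey
  have ht₀ := (hpath p₀ (hmem_l p₀ hp₀M)).isTrail
  rcases hdemcases p₀ hp₀M with hc | hc
  · -- p₀ joins a1 and b1; then b2 is an internal vertex of p₀
    have hp₀1 : p₀ ∈ M₁ := Multiset.mem_filter.mpr ⟨hp₀M, hc⟩
    have hendp : (p₀.1 = a1 ∧ p₀.2.1 = b1) ∨ (p₀.1 = b1 ∧ p₀.2.1 = a1) := hends1 p₀ hp₀1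
    have h2cnt : 2 ≤ cnt b2 p₀ := by
      rcases hendp with ⟨h1, h2⟩ | ⟨h1, h2⟩
      · exact two_le_countP_of_internal ht₀ b2 (fun hc => hab12 (hc.trans h1).symm)
          (fun hc => hb12 (hc.trans h2).symm) _ hp₀e (by simp)
      · exact two_le_countP_of_internal ht₀ b2 (fun hc => hb12 (hc.trans h1).symm)
          (fun hc => hab12 (hc.trans h2).symm) _ hp₀e (by simp)
    have hlb : n + 1 ≤ L.countP (fun e => b2 ∈ e) := by
      rw [hflat b2, hsplit b2]
      have hs1 : 2 ≤ (M₁.map (cnt b2)).sum :=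
        le_trans h2cnt (Multiset.single_le_sum (fun x _ => Nat.zero_le x) _
          (Multiset.mem_map_of_mem _ hp₀1))
      omega
    omega
  · -- p₀ joins a2 and b2; then a1 is an internal vertex of p₀
    have hp₀2 : p₀ ∈ M₂ := Multiset.mem_filter.mpr
      ⟨hp₀M, fun h => he12 (h.symm.trans hc)⟩
    have hendp : (p₀.1 = a2 ∧ p₀.2.1 = b2) ∨ (p₀.1 = b2 ∧ p₀.2.1 = a2) := hends2 p₀ hp₀2
    have h2cnt : 2 ≤ cnt a1 p₀ := by
      rcases hendp with ⟨h1, h2⟩ | ⟨h1, h2⟩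
      · exact two_le_countP_of_internal ht₀ a1 (fun hc => ha12 (hc.trans h1))
          (fun hc => hab12 (hc.trans h2)) _ hp₀e (by simp)
      · exact two_le_countP_of_internal ht₀ a1 (fun hc => hab12 (hc.trans h1))
          (fun hc => ha12 (hc.trans h2)) _ hp₀e (by simp)
    have hlb : n + 2 ≤ L.countP (fun e => a1 ∈ e) := by
      rw [hflat a1, hsplit a1]
      have hs2 : 2 ≤ (M₂.map (cnt a1)).sum :=
        le_trans h2cnt (Multiset.single_le_sum (fun x _ => Nat.zero_le x) _
          (Multiset.mem_map_of_mem _ hp₀2))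
      omega
    omega
end

section
/- Let n ≥ 1 and let A = {a₁, …, aₙ} and B = {b₁, …, bₙ} be disjoint sets of size n. Let D be the demand graph on (A, B) in which, for each 1 ≤ i ≤ n, the vertices aᵢ and bᵢ are joined by exactly ⌈n/3⌉ + 1 parallel demand edges, and there are no other demand edges. Then D is not resolvable in the complete bipartite graph K_{A,B}. -/
variable {V : Type*}

lemma cb_parity (A B : Finset V) (hAB : ∀ x, x ∈ A → x ∈ B → False)
    {u v : V} (w : (completeBipartite A B).Walk u v) :
    (u ∈ A → v ∈ B → Odd w.length) ∧ (u ∈ B → v ∈ A → Odd w.length) ∧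
    (u ∈ A → v ∈ A → Even w.length) ∧ (u ∈ B → v ∈ B → Even w.length) := by
  induction w with
  | nil =>
    refine ⟨fun h1 h2 => absurd (hAB _ h1 h2) (by simp),
      fun h1 h2 => absurd (hAB _ h2 h1) (by simp), fun _ _ => Even.zero, fun _ _ => Even.zero⟩
  | @cons u x v h w ih =>
    have h2 := (h : u ≠ x ∧ ((u ∈ A ∧ x ∈ B) ∨ (u ∈ B ∧ x ∈ A))).2
    simp only [SimpleGraph.Walk.length_cons, Nat.odd_add_one, Nat.even_add_one,
      Nat.not_even_iff_odd, Nat.not_odd_iff_even]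
    refine ⟨fun hu hv => ?_, fun hu hv => ?_, fun hu hv => ?_, fun hu hv => ?_⟩
    · rcases h2 with ⟨_, hx⟩ | ⟨hu', _⟩
      · exact ih.2.2.2 hx hv
      · exact absurd (hAB _ hu hu') not_false
    · rcases h2 with ⟨hu', _⟩ | ⟨_, hx⟩
      · exact absurd (hAB _ hu' hu) not_false
      · exact ih.2.2.1 hx hv
    · rcases h2 with ⟨_, hx⟩ | ⟨hu', _⟩
      · exact ih.2.1 hx hv
      · exact absurd (hAB _ hu hu') not_false
    · rcases h2 with ⟨hu', _⟩ | ⟨_, hx⟩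
      · exact absurd (hAB _ hu' hu) not_false
      · exact ih.1 hx hv

lemma edges_of_length_one {G : SimpleGraph V} {u v : V} (w : G.Walk u v)
    (h : w.length = 1) : w.edges = [s(u, v)] := by
  cases w with
  | nil => simp at h
  | cons h' w' =>
    cases w' with
    | nil => simp
    | cons h'' w'' => simp at h

lemma sum_map_filter_split {α : Type*} (p : α → Prop) [DecidablePred p]
    (g : α → ℕ) (l : List α) :
    (l.map g).sum = ((l.filter (fun x => p x)).map g).sum
      + ((l.filter (fun x => ¬ p x)).map g).sum := by
  induction l with
  | nil => simp
  | cons x l ih =>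
    by_cases hx : p x <;> simp [List.filter_cons, hx, ih] <;> omega

lemma length_filter_split {α : Type*} (p : α → Prop) [DecidablePred p] (l : List α) :
    l.length = (l.filter (fun x => p x)).length + (l.filter (fun x => ¬ p x)).length := by
  induction l with
  | nil => simp
  | cons x l ih =>
    by_cases hx : p x <;> simp [List.filter_cons, hx, ih] <;> omega

lemma le_sum_map {α : Type*} (g : α → ℕ) (c : ℕ) (l : List α)
    (h : ∀ x ∈ l, c ≤ g x) : l.length * c ≤ (l.map g).sum := by
  induction l with
  | nil => simp
  | cons x l ih =>
    simp only [List.length_cons, List.map_cons, List.sum_cons]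
    have := ih (fun y hy => h y (List.mem_cons_of_mem _ hy))
    have := h x List.mem_cons_self
    have : (l.length + 1) * c = l.length * c + c := by ring
    omega


/-- sharpness of Conjecture 1: the demand graph consisting of
`n` disjoint pairs `aᵢbᵢ`, each joined by `⌈n/3⌉ + 1` parallel demand edges,
is not resolvable in `K_{n,n}`.  (Here `⌈n/3⌉ = (n + 2) / 3` in `ℕ`.) -/
theorem conjecture_sharp [DecidableEq V] (n : ℕ) (hn : 1 ≤ n)
    (a b : Fin n → V) (ha : Function.Injective a) (hb : Function.Injective b)
    (hab : ∀ i j, a i ≠ b j) :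
    ¬ IsResolvable
        (completeBipartite (Finset.univ.image a) (Finset.univ.image b))
        (∑ i : Fin n, Multiset.replicate ((n + 2) / 3 + 1) s(a i, b i)) := by
  set A := Finset.univ.image a with hA
  set B := Finset.univ.image b with hB
  set c := (n + 2) / 3 + 1 with hc
  rintro ⟨l, hmap, hpath, hdisj⟩
  have hAB : ∀ x, x ∈ A → x ∈ B → False := by
    intro x hx1 hx2
    rw [hA, Finset.mem_image] at hx1
    rw [hB, Finset.mem_image] at hx2
    obtain ⟨i, _, hi⟩ := hx1
    obtain ⟨j, _, hj⟩ := hx2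
    exact hab i j (hi.trans hj.symm)
  -- endpoints of each path
  have hform : ∀ p ∈ l, ∃ i : Fin n, s(p.1, p.2.1) = s(a i, b i) := by
    intro p hp
    have hmem : s(p.1, p.2.1) ∈ (↑(l.map fun p => s(p.1, p.2.1)) : Multiset (Sym2 V)) :=
      Multiset.mem_coe.mpr (List.mem_map_of_mem hp)
    rw [hmap, Multiset.mem_sum] at hmem
    obtain ⟨i, _, hi⟩ := hmem
    exact ⟨i, Multiset.eq_of_mem_replicate hi⟩
  -- all lengths odd
  have hodd : ∀ p ∈ l, Odd p.2.2.length := by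
    intro p hp
    obtain ⟨i, hi⟩ := hform p hp
    have hai : a i ∈ A := Finset.mem_image_of_mem _ (Finset.mem_univ i)
    have hbi : b i ∈ B := Finset.mem_image_of_mem _ (Finset.mem_univ i)
    rw [Sym2.eq_iff] at hi
    rcases hi with ⟨h1, h2⟩ | ⟨h1, h2⟩
    · exact (cb_parity A B hAB p.2.2).1 (h1 ▸ hai) (h2 ▸ hbi)
    · exact (cb_parity A B hAB p.2.2).2.1 (h1 ▸ hbi) (h2 ▸ hai)
  -- length of l
  have hL : l.length = n * c := by
    have hcard := congrArg Multiset.card hmap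
    simpa using hcard
  -- the list of used edges
  have hEnodup : (l.flatMap fun p => p.2.2.edges).Nodup := by
    rw [List.nodup_flatMap]
    exact ⟨fun p hp => (hpath p hp).edges_nodup, hdisj.imp (fun h => h)⟩
  have hElen : (l.flatMap fun p => p.2.2.edges).length = (l.map fun p => p.2.2.length).sum := by
    rw [List.length_flatMap]
    congr 1
    exact List.map_congr_left fun p _ => p.2.2.length_edges
  -- upper bound on total length
  have hcardA : A.card = n := by
    rw [hA, Finset.card_image_of_injective _ ha, Finset.card_univ, Fintype.card_fin]
  have hcardB : B.card = n := by
    rw [hB, Finset.card_image_of_injective _ hb, Finset.card_univ, Fintype.card_fin]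
  have hupper : (l.map fun p => p.2.2.length).sum ≤ n * n := by
    rw [← hElen, ← List.toFinset_card_of_nodup hEnodup]
    have hsub : (l.flatMap fun p => p.2.2.edges).toFinset
        ⊆ (A ×ˢ B).image (fun q => s(q.1, q.2)) := by
      intro e he
      rw [List.mem_toFinset, List.mem_flatMap] at he
      obtain ⟨p, hp, hep⟩ := he
      have hedge := p.2.2.edges_subset_edgeSet hep
      induction e using Sym2.ind with
      | _ u v =>
        rw [SimpleGraph.mem_edgeSet] at hedge
        rcases (hedge : u ≠ v ∧ ((u ∈ A ∧ v ∈ B) ∨ (u ∈ B ∧ v ∈ A))).2 with ⟨hu, hv⟩ | ⟨hu, hv⟩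
        · exact Finset.mem_image.mpr ⟨(u, v), Finset.mem_product.mpr ⟨hu, hv⟩, rfl⟩
        · exact Finset.mem_image.mpr ⟨(v, u), Finset.mem_product.mpr ⟨hv, hu⟩, Sym2.eq_swap⟩
    calc (l.flatMap fun p => p.2.2.edges).toFinset.card
        ≤ ((A ×ˢ B).image (fun q => s(q.1, q.2))).card := Finset.card_le_card hsub
      _ ≤ (A ×ˢ B).card := Finset.card_image_le
      _ = n * n := by rw [Finset.card_product, hcardA, hcardB]
  -- the short paths
  have hk : (l.filter fun p => p.2.2.length = 1).length ≤ n := by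
    have hpw : (l.filter fun p => p.2.2.length = 1).Pairwise
        (fun p q => s(p.1, p.2.1) ≠ s(q.1, q.2.1)) := by
      refine (List.Pairwise.sublist (List.filter_sublist (l := l)) hdisj).imp_of_mem ?_
      intro p q hp hq hR heq
      rw [List.mem_filter] at hp hq
      simp only [decide_eq_true_eq] at hp hq
      have hep : p.2.2.edges = [s(p.1, p.2.1)] := edges_of_length_one _ hp.2
      have heq' : q.2.2.edges = [s(p.1, p.2.1)] := by
        rw [edges_of_length_one _ hq.2, heq]
      exact hR s(p.1, p.2.1) (by rw [hep]; simp) (by rw [heq']; simp)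
    have hmnodup : ((l.filter fun p => p.2.2.length = 1).map
        (fun p => s(p.1, p.2.1))).Nodup := List.Pairwise.map _ (fun p q h => h) hpw
    have hmsub : ((l.filter fun p => p.2.2.length = 1).map
        (fun p => s(p.1, p.2.1))).toFinset
        ⊆ Finset.univ.image (fun i : Fin n => s(a i, b i)) := by
      intro e he
      rw [List.mem_toFinset, List.mem_map] at he
      obtain ⟨p, hp, hpe⟩ := he
      obtain ⟨i, hi⟩ := hform p (List.mem_of_mem_filter hp)
      exact Finset.mem_image.mpr ⟨i, Finset.mem_univ i, by rw [← hi, hpe]⟩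
    calc (l.filter fun p => p.2.2.length = 1).length
        = ((l.filter fun p => p.2.2.length = 1).map (fun p => s(p.1, p.2.1))).length :=
          (List.length_map _).symm
      _ = ((l.filter fun p => p.2.2.length = 1).map
            (fun p => s(p.1, p.2.1))).toFinset.card :=
          (List.toFinset_card_of_nodup hmnodup).symm
      _ ≤ (Finset.univ.image (fun i : Fin n => s(a i, b i))).card :=
          Finset.card_le_card hmsub
      _ ≤ (Finset.univ : Finset (Fin n)).card := Finset.card_image_le
      _ = n := by simp
  -- lower bound on total length
  have hsplit : (l.map fun p => p.2.2.length).sum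
      = ((l.filter fun p => p.2.2.length = 1).map fun p => p.2.2.length).sum
        + ((l.filter fun p => ¬ p.2.2.length = 1).map fun p => p.2.2.length).sum :=
    sum_map_filter_split _ _ l
  have hlsplit : l.length = (l.filter fun p => p.2.2.length = 1).length
      + (l.filter fun p => ¬ p.2.2.length = 1).length := length_filter_split _ l
  have hS1 : (l.filter fun p => p.2.2.length = 1).length * 1
      ≤ ((l.filter fun p => p.2.2.length = 1).map fun p => p.2.2.length).sum := by
    refine le_sum_map _ _ _ fun p hp => ?_
    rw [List.mem_filter] at hp
    simp only [decide_eq_true_eq] at hp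
    omega
  have hS2 : (l.filter fun p => ¬ p.2.2.length = 1).length * 3
      ≤ ((l.filter fun p => ¬ p.2.2.length = 1).map fun p => p.2.2.length).sum := by
    refine le_sum_map _ _ _ fun p hp => ?_
    rw [List.mem_filter] at hp
    have hodd' := hodd p hp.1
    simp only [decide_not, Bool.not_eq_true', decide_eq_false_iff_not] at hp
    obtain ⟨m', hm'⟩ := hodd'
    omega
  -- final arithmetic
  have h3c : n + 3 ≤ 3 * c := by omega
  have hkey : n * n + 3 * n ≤ 3 * l.length := by
    calc n * n + 3 * n = n * (n + 3) := by ring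
      _ ≤ n * (3 * c) := Nat.mul_le_mul_left n h3c
      _ = 3 * (n * c) := by ring
      _ = 3 * l.length := by rw [hL]
  linarith [hk, hsplit, hlsplit, hS1, hS2, hupper, hkey, hn]
end

section
/- Let A and B be disjoint finite sets, let D be a demand graph on (A, B), and let u, x ∈ A and v, y ∈ B be four distinct vertices such that D contains a demand edge e joining u and v. Let D′ be the demand graph obtained from D by deleting one copy of e and adding one demand edge joining u and y, one joining x and y, and one joining x and v (the edge-lifting of e to xy). If D′ is resolvable in the complete bipartite graph K_{A,B}, then D is resolvable in K_{A,B}. -/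
variable {V : Type*}

/-- A demand graph `D` (a finite multiset of demand edges) is resolvable in the
simple graph `G` if to each demand edge one can assign a path of `G` joining its
two endpoints so that the assigned paths are pairwise edge-disjoint. -/
private lemma extract_aux {α β : Type*} (f : α → β) (l : List α) (a : β) (M : Multiset β)
    (h : (↑(l.map f) : Multiset β) = a ::ₘ M) :
    ∃ p l', l.Perm (p :: l') ∧ f p = a ∧ (↑(l'.map f) : Multiset β) = M := by
  have ha : a ∈ l.map f := by
    have : a ∈ (↑(l.map f) : Multiset β) := h ▸ Multiset.mem_cons_self a M
    simpa using this
  obtain ⟨p, hp, hfp⟩ := List.mem_map.mp ha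
  obtain ⟨s, t, rfl⟩ := List.append_of_mem hp
  refine ⟨p, s ++ t, List.perm_middle, hfp, ?_⟩
  have hperm : ((s ++ p :: t).map f).Perm (f p :: (s ++ t).map f) := by
    simpa using (List.perm_middle (a := p) (l₁ := s) (l₂ := t)).map f
  have hcoe : (↑((s ++ p :: t).map f) : Multiset β) = f p ::ₘ ↑((s ++ t).map f) :=
    Quot.sound hperm
  rw [hcoe, hfp] at h
  exact (Multiset.cons_inj_right a).mp h

private lemma norm_walk {G : SimpleGraph V} {a b u v : V} (w : G.Walk a b)
    (h : s(a, b) = s(u, v)) :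
    ∃ w' : G.Walk u v, ∀ e, e ∈ w'.edges → e ∈ w.edges := by
  rw [Sym2.eq_iff] at h
  rcases h with ⟨rfl, rfl⟩ | ⟨rfl, rfl⟩
  · exact ⟨w, fun e he => he⟩
  · exact ⟨w.reverse, fun e he => by simpa using he⟩

/-- if the demand graph obtained from `D` by edge-lifting a
demand edge `s(u, v)` to `xy` (with `u, x ∈ A`, `v, y ∈ B` four distinct
vertices) is resolvable in `K_{A,B}`, then so is `D`. -/
theorem edge_lifting_resolvable [DecidableEq V] (A B : Finset V)
    (hAB : Disjoint A B)
    (D : Multiset (Sym2 V)) (hD : IsBipartiteDemand A B D)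
    (u x : V) (hu : u ∈ A) (hx : x ∈ A) (hux : u ≠ x)
    (v y : V) (hv : v ∈ B) (hy : y ∈ B) (hvy : v ≠ y)
    (he : s(u, v) ∈ D)
    (hres : IsResolvable (completeBipartite A B)
      (s(u, y) ::ₘ s(x, y) ::ₘ s(x, v) ::ₘ D.erase s(u, v))) :
    IsResolvable (completeBipartite A B) D := by
  classical
  set G := completeBipartite A B
  obtain ⟨l, hmap, hpath, hpw⟩ := hres
  obtain ⟨p1, l1, hperm1, hf1, hmap1⟩ := extract_aux _ l _ _ hmap
  obtain ⟨p2, l2, hperm2, hf2, hmap2⟩ := extract_aux _ l1 _ _ hmap1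
  obtain ⟨p3, l3, hperm3, hf3, hmap3⟩ := extract_aux _ l2 _ _ hmap2
  have hperm : l.Perm (p1 :: p2 :: p3 :: l3) :=
    hperm1.trans ((hperm2.trans (hperm3.cons p2)).cons p1)
  have hsymm : Symmetric fun (p q : (a : V) × (b : V) × G.Walk a b) =>
      ∀ e ∈ p.2.2.edges, e ∉ q.2.2.edges := by
    intro p q h e heq hep
    exact h e hep heq
  have hpw' : (p1 :: p2 :: p3 :: l3).Pairwise
      fun p q => ∀ e ∈ p.2.2.edges, e ∉ q.2.2.edges :=
    (hperm.pairwise_iff (fun h => hsymm h)).mp hpw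
  obtain ⟨W1, hW1⟩ := norm_walk p1.2.2 hf1
  obtain ⟨W2, hW2⟩ := norm_walk p2.2.2 hf2
  obtain ⟨W3, hW3⟩ := norm_walk p3.2.2 hf3
  set W : G.Walk u v := W1.append (W2.reverse.append W3) with hW
  have hsub : ∀ e ∈ W.bypass.edges,
      e ∈ p1.2.2.edges ∨ e ∈ p2.2.2.edges ∨ e ∈ p3.2.2.edges := by
    intro e heW
    have : e ∈ W.edges := W.edges_bypass_subset heW
    rw [hW, SimpleGraph.Walk.edges_append, SimpleGraph.Walk.edges_append,
      SimpleGraph.Walk.edges_reverse] at this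
    rcases List.mem_append.mp this with h1 | h23
    · exact Or.inl (hW1 e h1)
    rcases List.mem_append.mp h23 with h2 | h3
    · exact Or.inr (Or.inl (hW2 e (List.mem_reverse.mp h2)))
    · exact Or.inr (Or.inr (hW3 e h3))
  refine ⟨⟨u, v, W.bypass⟩ :: l3, ?_, ?_, ?_⟩
  · have : (↑(((⟨u, v, W.bypass⟩ : (a : V) × (b : V) × G.Walk a b) :: l3).map
        fun p => s(p.1, p.2.1)) : Multiset (Sym2 V)) = s(u, v) ::ₘ ↑(l3.map fun p => s(p.1, p.2.1)) := by
      simp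
    rw [this, hmap3]
    exact Multiset.cons_erase he
  · rintro p hp
    rcases List.mem_cons.mp hp with rfl | hp
    · exact W.bypass_isPath
    · exact hpath p (hperm.symm.subset (by simp [hp]))
  · rw [List.pairwise_cons]
    rcases List.pairwise_cons.mp hpw' with ⟨h1, hrest1⟩
    rcases List.pairwise_cons.mp hrest1 with ⟨h2, hrest2⟩
    rcases List.pairwise_cons.mp hrest2 with ⟨h3, hrest3⟩
    refine ⟨?_, hrest3⟩
    intro q hq e heW
    rcases hsub e heW with h | h | h
    · exact h1 q (by simp [hq]) e h
    · exact h2 q (by simp [hq]) e h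
    · exact h3 q hq e h
end

section
/- Let G be a simple graph and D a demand graph on V(G). Then D is resolvable in G if and only if there exists a finite sequence of lifting operations which, applied successively to D, yields a demand graph whose demand edges are pairwise distinct and each of which is an edge of G (i.e. a simple subgraph of G). -/
variable {V : Type*}

/-- A single lifting operation on a demand graph: delete one copy of a demand
edge `s(x, y)` and add the two demand edges `s(x, z)` and `s(z, y)`, for a
vertex `z ∉ {x, y}`. -/
def LiftStep [DecidableEq V] (D D' : Multiset (Sym2 V)) : Prop :=
  ∃ x y z : V, s(x, y) ∈ D ∧ z ≠ x ∧ z ≠ y ∧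
    D' = s(x, z) ::ₘ s(z, y) ::ₘ D.erase s(x, y)

set_option linter.unusedSectionVars false

section Helpers

open SimpleGraph Walk

variable [DecidableEq V] {G : SimpleGraph V}

lemma liftStep_add_left {M M' : Multiset (Sym2 V)} (h : LiftStep M M')
    (N : Multiset (Sym2 V)) : LiftStep (N + M) (N + M') := by
  obtain ⟨x, y, z, hm, hzx, hzy, rfl⟩ := h
  refine ⟨x, y, z, Multiset.mem_add.2 (Or.inr hm), hzx, hzy, ?_⟩
  rw [Multiset.erase_add_right_pos _ hm, Multiset.add_cons, Multiset.add_cons]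

lemma lift_of_path {u v : V} (p : G.Walk u v) :
    p.IsPath → u ≠ v → ∀ M : Multiset (Sym2 V),
      Relation.ReflTransGen LiftStep (s(u, v) ::ₘ M) (↑p.edges + M) := by
  induction p with
  | nil => exact fun _ huv _ => absurd rfl huv
  | @cons u a v h t ih =>
    intro hp huv M
    cases t with
    | nil =>
      simp only [edges_cons, edges_nil]
      rw [show ((↑[s(u, a)] : Multiset (Sym2 V)) + M) = s(u, a) ::ₘ M by
        rw [← Multiset.singleton_add]; rfl]
    | @cons a b v h' q =>
      have hav : a ≠ v := by
        intro hEq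
        have hnd := hp.support_nodup
        rw [support_cons, support_cons, List.nodup_cons, List.nodup_cons] at hnd
        exact hnd.2.1 (hEq ▸ q.end_mem_support)
      have step : LiftStep (s(u, v) ::ₘ M) (s(u, a) ::ₘ s(a, v) ::ₘ M) :=
        ⟨u, v, a, Multiset.mem_cons_self _ _, h.ne', hav, by
          rw [Multiset.erase_cons_head]⟩
      refine Relation.ReflTransGen.head step ?_
      rw [Multiset.cons_swap]
      have := ih hp.of_cons hav (s(u, a) ::ₘ M)
      convert this using 1
      rw [edges_cons, ← Multiset.cons_coe, Multiset.cons_add, Multiset.add_cons]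

end Helpers

section Helpers2

open SimpleGraph Walk

variable [DecidableEq V] {G : SimpleGraph V}

lemma lift_list : ∀ (l : List ((u : V) × (v : V) × G.Walk u v)),
    (∀ p ∈ l, p.2.2.IsPath) → (∀ p ∈ l, p.1 ≠ p.2.1) →
    Relation.ReflTransGen LiftStep
      (↑(l.map fun p => s(p.1, p.2.1)) : Multiset (Sym2 V))
      (↑((l.map fun p => p.2.2.edges).flatten))
  | [], _, _ => by
    simp only [List.map_nil, List.flatten_nil, Multiset.coe_nil]
    exact Relation.ReflTransGen.refl
  | p :: l, hp, hne => by
    simp only [List.map_cons, List.flatten_cons, ← Multiset.cons_coe]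
    have h1 := lift_of_path p.2.2 (hp p (by simp)) (hne p (by simp))
      (↑(l.map fun p => s(p.1, p.2.1)))
    have h2 := (lift_list l (fun q hq => hp q (by simp [hq]))
      (fun q hq => hne q (by simp [hq]))).lift (f := fun M => (↑p.2.2.edges : Multiset (Sym2 V)) + M)
      (fun a b hab => liftStep_add_left hab _)
    refine h1.trans (h2.trans ?_)
    rw [← Multiset.coe_add]

lemma exists_unit_list (G : SimpleGraph V) (D : Multiset (Sym2 V)) :
    (∀ e ∈ D, e ∈ G.edgeSet) →
    ∃ l : List ((u : V) × (v : V) × G.Walk u v),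
      (↑(l.map fun p => s(p.1, p.2.1)) : Multiset (Sym2 V)) = D ∧
      ∀ p ∈ l, p.2.2.IsPath ∧ p.2.2.edges = [s(p.1, p.2.1)] := by
  induction D using Multiset.induction_on with
  | empty => exact fun _ => ⟨[], by simp, by simp⟩
  | cons e s ih =>
    induction e using Sym2.ind with
    | _ a b =>
      intro h
      have hadj : G.Adj a b := h _ (Multiset.mem_cons_self _ _)
      obtain ⟨l, hl1, hl2⟩ := ih (fun e he => h e (Multiset.mem_cons_of_mem he))
      refine ⟨⟨a, b, Walk.cons hadj Walk.nil⟩ :: l, by simp [← hl1, Multiset.cons_coe], ?_⟩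
      intro p hp
      rcases List.mem_cons.mp hp with rfl | hp
      · exact ⟨by simp [Walk.cons_isPath_iff, hadj.ne], by simp⟩
      · exact hl2 p hp

lemma resolvable_of_simple (G : SimpleGraph V) (D : Multiset (Sym2 V))
    (hnd : D.Nodup) (h : ∀ e ∈ D, e ∈ G.edgeSet) : IsResolvable G D := by
  obtain ⟨l, hl1, hl2⟩ := exists_unit_list G D h
  refine ⟨l, hl1, fun p hp => (hl2 p hp).1, ?_⟩
  have : (l.map fun p => s(p.1, p.2.1)).Nodup := by
    rw [← Multiset.coe_nodup, hl1]; exact hnd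
  refine (List.pairwise_map.mp this).imp_of_mem ?_
  intro p q hp hq hne e hep heq
  rw [(hl2 p hp).2, List.mem_singleton] at hep
  rw [(hl2 q hq).2, List.mem_singleton] at heq
  exact hne (hep ▸ heq ▸ rfl)

end Helpers2

section Helpers3

open SimpleGraph Walk

variable [DecidableEq V] {G : SimpleGraph V}

private lemma key_walk {a b c d : V} (w : G.Walk a b) (h : s(a, b) = s(c, d)) :
    ∃ W : G.Walk c d, ∀ e ∈ W.edges, e ∈ w.edges := by
  rw [Sym2.eq_iff] at h
  rcases h with ⟨rfl, rfl⟩ | ⟨rfl, rfl⟩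
  · exact ⟨w, fun e he => he⟩
  · exact ⟨w.reverse, by simp [Walk.edges_reverse]⟩

lemma resolvable_of_liftStep {D D' : Multiset (Sym2 V)}
    (h : LiftStep D D') (hres : IsResolvable G D') : IsResolvable G D := by
  classical
  obtain ⟨x, y, z, hmem, hzx, hzy, rfl⟩ := h
  obtain ⟨l, hmap, hpath, hpair⟩ := hres
  set R : ((u : V) × (v : V) × G.Walk u v) → ((u : V) × (v : V) × G.Walk u v) → Prop :=
    fun p q => ∀ e ∈ p.2.2.edges, e ∉ q.2.2.edges with hR
  have hsymm : ∀ {p q}, R p q → R q p := fun hpq e heq hep => hpq e hep heq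
  -- find p resolving s(x,z)
  have hxz : s(x, z) ∈ l.map fun p => s(p.1, p.2.1) := by
    rw [← Multiset.mem_coe, hmap]; exact Multiset.mem_cons_self _ _
  obtain ⟨p, hpl, hpd⟩ := List.mem_map.mp hxz
  set l1 := l.erase p with hl1def
  have perm1 : List.Perm l (p :: l1) := List.perm_cons_erase hpl
  have hmap1 : (↑((p :: l1).map fun r => s(r.1, r.2.1)) : Multiset (Sym2 V)) =
      s(x, z) ::ₘ s(z, y) ::ₘ D.erase s(x, y) := by
    rw [← hmap]; exact (Multiset.coe_eq_coe.mpr (perm1.map _)).symm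
  rw [List.map_cons, ← Multiset.cons_coe, hpd, Multiset.cons_inj_right] at hmap1
  -- find q resolving s(z,y)
  have hzy' : s(z, y) ∈ l1.map fun r => s(r.1, r.2.1) := by
    rw [← Multiset.mem_coe, hmap1]; exact Multiset.mem_cons_self _ _
  obtain ⟨q, hql1, hqd⟩ := List.mem_map.mp hzy'
  set l2 := l1.erase q with hl2def
  have perm2 : List.Perm l1 (q :: l2) := List.perm_cons_erase hql1
  have hmap2 : (↑((q :: l2).map fun r => s(r.1, r.2.1)) : Multiset (Sym2 V)) =
      s(z, y) ::ₘ D.erase s(x, y) := by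
    rw [← hmap1]; exact (Multiset.coe_eq_coe.mpr (perm2.map _)).symm
  rw [List.map_cons, ← Multiset.cons_coe, hqd, Multiset.cons_inj_right] at hmap2
  -- pairwise facts
  have hpair1 : (p :: l1).Pairwise R := (perm1.pairwise_iff hsymm).mp hpair
  rw [List.pairwise_cons] at hpair1
  have hpair2 : (q :: l2).Pairwise R := (perm2.pairwise_iff hsymm).mp hpair1.2
  rw [List.pairwise_cons] at hpair2
  -- build the combined walk
  obtain ⟨W1, hW1⟩ := key_walk p.2.2 hpd
  obtain ⟨W2, hW2⟩ := key_walk q.2.2 hqd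
  refine ⟨⟨x, y, (W1.append W2).bypass⟩ :: l2, ?_, ?_, ?_⟩
  · rw [List.map_cons, ← Multiset.cons_coe, hmap2]
    exact Multiset.cons_erase hmem
  · intro r hr
    rcases List.mem_cons.mp hr with rfl | hr
    · exact Walk.bypass_isPath _
    · exact hpath r (List.mem_of_mem_erase (List.mem_of_mem_erase hr))
  · rw [List.pairwise_cons]
    refine ⟨?_, hpair2.2⟩
    intro r hr e he her
    have := (W1.append W2).edges_bypass_subset he
    rw [Walk.edges_append, List.mem_append] at this
    rcases this with h1 | h2
    · exact hpair1.1 r (List.mem_of_mem_erase hr) e (hW1 e h1) her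
    · exact hpair2.1 r hr e (hW2 e h2) her

end Helpers3

/-- `D` is resolvable in `G` iff some finite sequence of
liftings transforms `D` into a demand graph with pairwise distinct demand
edges, all of which are edges of `G` (i.e. into a simple subgraph of `G`). -/
theorem resolvable_iff_liftings [DecidableEq V] (G : SimpleGraph V)
    (D : Multiset (Sym2 V)) (hD : ∀ e ∈ D, ¬ e.IsDiag) :
    IsResolvable G D ↔
      ∃ D' : Multiset (Sym2 V), Relation.ReflTransGen LiftStep D D' ∧
        D'.Nodup ∧ ∀ e ∈ D', e ∈ G.edgeSet := by
  constructor
  · rintro ⟨l, hmap, hpath, hpair⟩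
    refine ⟨↑((l.map fun p => p.2.2.edges).flatten), ?_, ?_, ?_⟩
    · have hne : ∀ p ∈ l, p.1 ≠ p.2.1 := by
        intro p hp h
        exact hD s(p.1, p.2.1)
          (by rw [← hmap]; exact Multiset.mem_coe.mpr (List.mem_map.mpr ⟨p, hp, rfl⟩))
          (by simp [h])
      have := lift_list l hpath hne
      rwa [hmap] at this
    · rw [Multiset.coe_nodup, List.nodup_flatten]
      refine ⟨?_, ?_⟩
      · intro l' hl'
        obtain ⟨p, hp, rfl⟩ := List.mem_map.mp hl'
        exact (hpath p hp).edges_nodup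
      · exact List.Pairwise.map _ (fun a b h => h) hpair
    · intro e he
      rw [Multiset.mem_coe, List.mem_flatten] at he
      obtain ⟨l', hl', hel⟩ := he
      obtain ⟨p, hp, rfl⟩ := List.mem_map.mp hl'
      exact p.2.2.edges_subset_edgeSet hel
  · rintro ⟨D', hRTG, hnd, hsub⟩
    clear hD
    induction hRTG using Relation.ReflTransGen.head_induction_on with
    | refl => exact resolvable_of_simple G D' hnd hsub
    | head hstep _ ih => exact resolvable_of_liftStep hstep ih
end

section
/- Let A and B be disjoint finite sets, let D be a demand graph on (A, B), and let Z ⊆ A ∪ B. Suppose that the demand edges of D incident to at least one vertex of Z are pairwise distinct (no two of them join the same pair of vertices), and that the demand graph consisting of those demand edges of D with both endpoints outside Z is resolvable in the complete bipartite graph K_{A∖Z, B∖Z}. Then D is resolvable in the complete bipartite graph K_{A,B}. -/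
variable {V : Type*}

lemma singleton_list [DecidableEq V] (A B : Finset V) (hAB : Disjoint A B)
    (L : List (Sym2 V)) (hL : ∀ e ∈ L, ∃ a ∈ A, ∃ b ∈ B, e = s(a, b)) :
    ∃ l : List ((u : V) × (v : V) × (completeBipartite A B).Walk u v),
      (l.map fun p => s(p.1, p.2.1)) = L ∧
      (∀ p ∈ l, p.2.2.IsPath) ∧
      (∀ p ∈ l, p.2.2.edges = [s(p.1, p.2.1)]) := by
  induction L with
  | nil => exact ⟨[], rfl, by simp, by simp⟩
  | cons e L ih =>
    obtain ⟨a, ha, b, hb, rfl⟩ := hL e (by simp)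
    obtain ⟨l, h1, h2, h3⟩ := ih fun e he => hL e (by simp [he])
    have hne : a ≠ b := fun h => (Finset.disjoint_left.mp hAB ha) (h ▸ hb)
    have hadj : (completeBipartite A B).Adj a b := ⟨hne, Or.inl ⟨ha, hb⟩⟩
    refine ⟨⟨a, b, SimpleGraph.Walk.cons hadj SimpleGraph.Walk.nil⟩ :: l,
      by simp [h1], ?_, ?_⟩
    · intro p hp
      rw [List.mem_cons] at hp
      rcases hp with rfl | hp
      · exact (SimpleGraph.Path.singleton hadj).2
      · exact h2 p hp
    · intro p hp
      rw [List.mem_cons] at hp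
      rcases hp with rfl | hp
      · simp
      · exact h3 p hp

/-- the induction step of Theorem 4: if the demand edges of
`D` incident to `Z` are pairwise distinct, and the demand edges of `D` with
both endpoints outside `Z` form a demand graph resolvable in
`K_{A \ Z, B \ Z}`, then `D` is resolvable in `K_{A,B}`. -/
theorem induction_step [DecidableEq V] (A B : Finset V) (hAB : Disjoint A B)
    (D : Multiset (Sym2 V)) (hD : IsBipartiteDemand A B D)
    (Z : Finset V) (hZ : Z ⊆ A ∪ B)
    (hinc : (D.filter fun e => ∃ v ∈ Z, v ∈ e).Nodup)
    (hres : IsResolvable (completeBipartite (A \ Z) (B \ Z))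
      (D.filter fun e => ¬ ∃ v ∈ Z, v ∈ e)) :
    IsResolvable (completeBipartite A B) D := by
  classical
  set P : Sym2 V → Prop := fun e => ∃ v ∈ Z, v ∈ e with hP
  have hle : completeBipartite (A \ Z) (B \ Z) ≤ completeBipartite A B := by
    intro u v h
    refine ⟨h.1, h.2.imp ?_ ?_⟩ <;>
      exact fun ⟨hu, hv⟩ =>
        ⟨(Finset.mem_sdiff.mp hu).1, (Finset.mem_sdiff.mp hv).1⟩
  -- every vertex of an edge of the small graph avoids Z
  have havoid : ∀ e ∈ (completeBipartite (A \ Z) (B \ Z)).edgeSet,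
      ∀ v ∈ e, v ∉ Z := by
    intro e he
    induction e with
    | h u w =>
      intro v hv
      rw [SimpleGraph.mem_edgeSet] at he
      have hu : u ∉ Z := by
        rcases he.2 with ⟨h1, _⟩ | ⟨h1, _⟩ <;>
          exact (Finset.mem_sdiff.mp h1).2
      have hw : w ∉ Z := by
        rcases he.2 with ⟨_, h1⟩ | ⟨_, h1⟩ <;>
          exact (Finset.mem_sdiff.mp h1).2
      rcases Sym2.mem_iff.mp hv with rfl | rfl
      · exact hu
      · exact hw
  obtain ⟨l₂, hmap₂, hpath₂, hpw₂⟩ := hres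
  -- transfer l₂ into the big graph
  let tr : ((u : V) × (v : V) × (completeBipartite (A \ Z) (B \ Z)).Walk u v) →
      ((u : V) × (v : V) × (completeBipartite A B).Walk u v) :=
    fun p => ⟨p.1, p.2.1, p.2.2.transfer (completeBipartite A B)
      (fun e he => SimpleGraph.edgeSet_mono hle (p.2.2.edges_subset_edgeSet he))⟩
  let l₂' := l₂.map tr
  -- singleton paths for the Z-incident demands
  obtain ⟨l₁, h1, h2, h3⟩ := singleton_list A B hAB (D.filter P).toList
    (fun e he => hD e (Multiset.mem_of_mem_filter
      (by rwa [← Multiset.mem_toList])))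
  have hLnodup : (D.filter P).toList.Nodup := by
    have := Multiset.coe_toList (D.filter P)
    rw [← Multiset.coe_nodup, this]
    exact hinc
  refine ⟨l₁ ++ l₂', ?_, ?_, ?_⟩
  · have e1 : (l₁.map fun p => s(p.1, p.2.1) : Multiset (Sym2 V))
        = D.filter P := by
      rw [h1, Multiset.coe_toList]
    have e2 : (l₂'.map fun p => s(p.1, p.2.1) : Multiset (Sym2 V))
        = D.filter (fun e => ¬ P e) := by
      rw [← hmap₂]
      congr 1
      simp [l₂', tr, List.map_map, Function.comp]
    rw [List.map_append, ← Multiset.coe_add, e1, e2, Multiset.filter_add_not]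
  · intro p hp
    rcases List.mem_append.mp hp with hp | hp
    · exact h2 p hp
    · obtain ⟨q, hq, rfl⟩ := List.mem_map.mp hp
      exact (hpath₂ q hq).transfer _
  · rw [List.pairwise_append]
    refine ⟨?_, ?_, ?_⟩
    · -- within l₁: distinct single edges
      have hnd : (l₁.map fun p => s(p.1, p.2.1)).Nodup := h1 ▸ hLnodup
      have : l₁.Pairwise fun p q => s(p.1, p.2.1) ≠ s(q.1, q.2.1) :=
        List.pairwise_map.mp hnd
      refine this.imp_of_mem ?_
      intro p q hp hq hne e hep heq
      rw [h3 p hp, List.mem_singleton] at hep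
      rw [h3 q hq, List.mem_singleton] at heq
      exact hne (hep ▸ heq ▸ rfl)
    · -- within l₂'
      have := (List.pairwise_map.mpr ?_ : l₂'.Pairwise
        fun p q => ∀ e ∈ p.2.2.edges, e ∉ q.2.2.edges)
      · exact this
      · refine hpw₂.imp ?_
        intro p q h e hep heq
        simp only [tr, SimpleGraph.Walk.edges_transfer] at hep heq
        exact h e hep heq
    · -- cross: l₁ paths use Z-incident edges, l₂' paths avoid Z
      intro p hp q hq e hep heq
      have hpe : s(p.1, p.2.1) ∈ D.filter P := by
        rw [← Multiset.mem_toList, ← h1]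
        exact List.mem_map_of_mem hp
      obtain ⟨v, hvZ, hve⟩ := (Multiset.mem_filter.mp hpe).2
      obtain ⟨q', hq', rfl⟩ := List.mem_map.mp hq
      rw [h3 p hp, List.mem_singleton] at hep
      subst hep
      simp only [tr, SimpleGraph.Walk.edges_transfer] at heq
      exact havoid _ (q'.2.2.edges_subset_edgeSet heq) v hve hvZ
end

section
/- Let D be a demand graph on disjoint finite sets A and B with |A| = a and |B| = b, a ≥ b, such that every vertex of A has degree exactly Δ_A in D and every vertex of B has degree exactly Δ_B in D (so a·Δ_A = b·Δ_B equals the number of demand edges of D). If Δ_A ≤ b/4, then the multiset of demand edges of D can be partitioned into a sub-multisets M′₁, …, M′ₐ, each of which is a matching of size Δ_A (i.e. each M′ᵢ consists of Δ_A demand edges no two of which share an endpoint). -/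
variable {V : Type*}

section AuxiliaryLemmas

variable [DecidableEq V]

open Multiset

def cfb : Sym2 V → Sym2 V → Bool :=
  Sym2.lift₂ ⟨fun a b c d => a = c || a = d || b = c || b = d, by
    intros; constructor <;> (simp only [Bool.or_assoc, Bool.or_comm, Bool.or_left_comm])⟩

lemma cfb_iff (e f : Sym2 V) : cfb e f = true ↔ ∃ w ∈ e, w ∈ f := by
  induction e, f using Sym2.inductionOn₂ with
  | _ a b c d =>
    rw [cfb, Sym2.lift₂_mk]
    simp [Sym2.mem_iff]
    aesop

lemma cfb_comm (e f : Sym2 V) : cfb e f = cfb f e := by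
  rw [Bool.eq_iff_iff, cfb_iff, cfb_iff]
  exact ⟨fun ⟨w, h1, h2⟩ => ⟨w, h2, h1⟩, fun ⟨w, h1, h2⟩ => ⟨w, h2, h1⟩⟩

lemma cfb_self (e : Sym2 V) : cfb e e = true := by
  rw [cfb_iff]
  induction e using Sym2.inductionOn with
  | _ a b => exact ⟨a, by simp, by simp⟩

lemma not_cfb_iff (e f : Sym2 V) : cfb e f = false ↔ ∀ w ∈ e, w ∉ f := by
  rw [← Bool.not_eq_true, cfb_iff]; push_neg; rfl

open Multiset


lemma sum_ite_cfb (f : Sym2 V) (m : Multiset (Sym2 V)) :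
    (m.map fun e => (if cfb e f then 1 else 0)).sum
      = (m.filter fun g => cfb f g).card := by
  induction m using Multiset.induction_on with
  | empty => simp
  | cons a t ih =>
    rw [Multiset.map_cons, Multiset.sum_cons, Multiset.filter_cons, ih, cfb_comm a f]
    split <;> simp [add_comm]

/-- conflict potential of a multiset of edges -/
def cN (m : Multiset (Sym2 V)) : ℕ :=
  ((m.map fun e => (m.filter fun f => cfb e f).card)).sum

lemma cN_cons (f : Sym2 V) (m : Multiset (Sym2 V)) :
    cN (f ::ₘ m) = cN m + 2 * (m.filter fun g => cfb f g).card + 1 := by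
  unfold cN
  rw [Multiset.map_cons, Multiset.sum_cons]
  have h1 : ((f ::ₘ m).filter fun g => cfb f g).card
      = (m.filter fun g => cfb f g).card + 1 := by
    rw [Multiset.filter_cons, if_pos (cfb_self f)]
    simp [add_comm]
  have h3 : (m.map fun e => ((f ::ₘ m).filter fun g => cfb e g).card)
      = m.map fun e => (m.filter fun g => cfb e g).card + (if cfb e f then 1 else 0) := by
    refine Multiset.map_congr rfl fun e _ => ?_
    rw [Multiset.filter_cons]
    split <;> simp [add_comm]
  rw [h3]
  have h4 : (m.map fun e => (m.filter fun g => cfb e g).card + (if cfb e f then 1 else 0)).sum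
      = (m.map fun e => (m.filter fun g => cfb e g).card).sum
        + (m.map fun e => (if cfb e f then 1 else 0)).sum := by
    rw [← Multiset.sum_map_add]
  rw [h1, h4, sum_ite_cfb]
  ring

lemma term_pos {m : Multiset (Sym2 V)} {e : Sym2 V} (he : e ∈ m) :
    1 ≤ (m.filter fun f => cfb e f).card := by
  have : e ∈ m.filter fun f => cfb e f := Multiset.mem_filter.2 ⟨he, cfb_self e⟩
  exact Multiset.card_pos_iff_exists_mem.2 ⟨e, this⟩

lemma card_le_cN (m : Multiset (Sym2 V)) : m.card ≤ cN m := by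
  unfold cN
  calc m.card = (m.map fun _ => 1).sum := by simp
  _ ≤ _ := Multiset.sum_map_le_sum_map _ _ fun e he => term_pos he

lemma cN_erase {m : Multiset (Sym2 V)} {e : Sym2 V} (he : e ∈ m) :
    cN m = cN (m.erase e) + 2 * ((m.erase e).filter fun g => cfb e g).card + 1 := by
  conv_lhs => rw [← Multiset.cons_erase he]
  exact cN_cons e (m.erase e)

lemma filter_card_cons_self {m : Multiset (Sym2 V)} {e : Sym2 V} (he : e ∈ m) :
    (m.filter fun f => cfb e f).card
      = ((m.erase e).filter fun g => cfb e g).card + 1 := by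
  conv_lhs => rw [← Multiset.cons_erase he]
  rw [Multiset.filter_cons, if_pos (cfb_self e)]
  simp [add_comm]

lemma exists_conflict_of_card_lt_cN {m : Multiset (Sym2 V)} (h : m.card < cN m) :
    ∃ e ∈ m, 1 ≤ ((m.erase e).filter fun g => cfb e g).card := by
  by_contra hc
  push_neg at hc
  have hle : ∀ e ∈ m, (m.filter fun f => cfb e f).card ≤ 1 := by
    intro e he
    have h1 := hc e he
    have h2 := filter_card_cons_self he
    omega
  have : cN m ≤ m.card := by
    unfold cN
    calc (m.map fun e => (m.filter fun f => cfb e f).card).sum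
        ≤ (m.map fun _ => 1).sum := Multiset.sum_map_le_sum_map _ _ hle
    _ = m.card := by simp
  omega

lemma all_one_of_sum_le_card {α : Type*} {t : α → ℕ} :
    ∀ {m : Multiset α}, (∀ e ∈ m, 1 ≤ t e) → (m.map t).sum ≤ m.card →
      ∀ e ∈ m, t e = 1 := by
  intro m
  induction m using Multiset.induction_on with
  | empty => intro _ _ e he; simp at he
  | cons a s ih =>
    intro h1 h2 e he
    rw [Multiset.map_cons, Multiset.sum_cons, Multiset.card_cons] at h2
    have hs : s.card ≤ (s.map t).sum := by
      calc s.card = (s.map fun _ => 1).sum := by simp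
      _ ≤ _ := Multiset.sum_map_le_sum_map _ _ fun x hx => h1 x (Multiset.mem_cons_of_mem hx)
    have hta : 1 ≤ t a := h1 a (Multiset.mem_cons_self a s)
    rcases Multiset.mem_cons.1 he with rfl | he'
    · omega
    · exact ih (fun x hx => h1 x (Multiset.mem_cons_of_mem hx)) (by omega) e he'

lemma pairwise_of_cN_eq {m : Multiset (Sym2 V)} (h : cN m = m.card) :
    m.Pairwise fun e f => ∀ w ∈ e, w ∉ f := by
  have hterm : ∀ e ∈ m, (m.filter fun f => cfb e f).card = 1 :=
    all_one_of_sum_le_card (fun e he => term_pos he) (le_of_eq h)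
  have hcount : ∀ e ∈ m, m.count e = 1 := by
    intro e he
    have h1 : (m.filter fun f => cfb e f).count e = m.count e := by
      rw [Multiset.count_filter, if_pos (cfb_self e)]
    have h2 : (m.filter fun f => cfb e f).count e ≤ (m.filter fun f => cfb e f).card :=
      Multiset.count_le_card _ _
    have h3 : 1 ≤ m.count e := Multiset.count_pos.2 he
    rw [hterm e he] at h2
    omega
  have hnd : m.Nodup := Multiset.nodup_iff_count_le_one.2 fun e => by
    by_cases he : e ∈ m
    · exact (hcount e he).le
    · simp [Multiset.count_eq_zero_of_notMem he]
  have hcross : ∀ e ∈ m, ∀ f ∈ m, e ≠ f → cfb e f = false := by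
    intro e he f hf hne
    cases hcfb : cfb e f
    · rfl
    exfalso
    have hef : e ∈ m.filter fun g => cfb e g := Multiset.mem_filter.2 ⟨he, cfb_self e⟩
    have hff : f ∈ (m.filter fun g => cfb e g).erase e :=
      (Multiset.mem_erase_of_ne (Ne.symm hne)).2 (Multiset.mem_filter.2 ⟨hf, hcfb⟩)
    have h1 : 1 ≤ ((m.filter fun g => cfb e g).erase e).card :=
      Multiset.card_pos_iff_exists_mem.2 ⟨f, hff⟩
    have h2 : ((m.filter fun g => cfb e g).erase e).card = 0 := by
      rw [Multiset.card_erase_of_mem hef, hterm e he]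
      rfl
    omega
  refine ⟨m.toList, (Multiset.coe_toList m).symm, ?_⟩
  have hndl : m.toList.Nodup := by
    have := (Multiset.coe_toList m)
    rw [← Multiset.coe_nodup, this]
    exact hnd
  refine List.Pairwise.imp_of_mem ?_ hndl
  intro a b ha hb hab
  rw [← not_cfb_iff]
  exact hcross a (by rwa [← Multiset.mem_toList]) b (by rwa [← Multiset.mem_toList]) hab

-- splitting off a submultiset of given size
lemma exists_split {α : Type*} (s : ℕ) (m : Multiset α) (h : s ≤ m.card) :
    ∃ t u : Multiset α, m = t + u ∧ t.card = s := by
  refine ⟨(m.toList.take s : List α), (m.toList.drop s : List α), ?_, ?_⟩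
  · rw [Multiset.coe_add, List.take_append_drop, Multiset.coe_toList]
  · rw [Multiset.coe_card, List.length_take, Multiset.length_toList]
    omega

lemma exists_partition {α : Type*} (s : ℕ) :
    ∀ (n : ℕ) (m : Multiset α), m.card = n * s →
      ∃ M : Fin n → Multiset α, (∑ i, M i) = m ∧ ∀ i, (M i).card = s := by
  intro n
  induction n with
  | zero =>
    intro m hm
    refine ⟨fun i => 0, ?_, fun i => i.elim0⟩
    simp only [Nat.zero_mul] at hm
    simp [Multiset.card_eq_zero.1 hm]
  | succ n ih =>
    intro m hm
    obtain ⟨t, u, rfl, ht⟩ := exists_split s m (by rw [hm]; nlinarith [Nat.succ_mul n s])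
    have hu : u.card = n * s := by
      have h2 : t.card + u.card = (n+1) * s := by rw [← Multiset.card_add, hm]
      have h3 : (n+1)*s = n*s+s := by ring
      omega
    obtain ⟨M, hsum, hcard⟩ := ih u hu
    refine ⟨Fin.cons t M, ?_, ?_⟩
    · rw [Fin.sum_cons, hsum]
    · intro i
      induction i using Fin.cases with
      | zero => simpa using ht
      | succ j => simpa using hcard j

-- filter distributes over finset-indexed sums of multisets
lemma filter_sum_fin {α : Type*} (p : α → Prop) [DecidablePred p] {n : ℕ}
    (M : Fin n → Multiset α) (s : Finset (Fin n)) :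
    (∑ i ∈ s, M i).filter p = ∑ i ∈ s, (M i).filter p := by
  induction s using Finset.cons_induction with
  | empty => simp
  | cons a s ha ih => rw [Finset.sum_cons, Finset.sum_cons, Multiset.filter_add, ih]

lemma card_filter_or {α : Type*} (p q : α → Prop) [DecidablePred p] [DecidablePred q]
    (m : Multiset α) :
    (m.filter fun a => p a ∨ q a).card ≤ (m.filter p).card + (m.filter q).card := by
  induction m using Multiset.induction_on with
  | empty => simp
  | cons a t ih =>
    rw [Multiset.filter_cons, Multiset.filter_cons, Multiset.filter_cons]
    split_ifs with h1 h2 h3 <;> simp_all <;> omega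

/-- the number of edges of `D` conflicting with something in `R` is at most
the sum over `R` of conflict degrees. -/
lemma card_filter_exists_le (D : Multiset (Sym2 V)) :
    ∀ (R : Multiset (Sym2 V)),
      (D.filter fun f => 0 < (R.filter fun g => cfb g f).card).card
        ≤ (R.map fun g => (D.filter fun f => cfb g f).card).sum := by
  intro R
  induction R using Multiset.induction_on with
  | empty =>
    rw [Multiset.filter_eq_nil.2 (fun a _ => by simp)]
    simp
  | cons a t ih =>
    rw [Multiset.map_cons, Multiset.sum_cons]
    have hcong : (D.filter fun f => 0 < ((a ::ₘ t).filter fun g => cfb g f).card)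
        = D.filter fun f => (cfb a f = true) ∨ 0 < (t.filter fun g => cfb g f).card := by
      apply Multiset.filter_congr
      intro f _
      rw [Multiset.filter_cons]
      constructor
      · intro h
        by_cases haf : cfb a f
        · exact Or.inl haf
        · right; rw [if_neg haf] at h; simpa using h
      · intro h
        rcases h with h | h
        · rw [if_pos h]; simp
        · split_ifs <;> simp <;> omega
    rw [hcong]
    calc (D.filter fun f => (cfb a f = true) ∨ 0 < (t.filter fun g => cfb g f).card).card
        ≤ (D.filter fun f => cfb a f).card
          + (D.filter fun f => 0 < (t.filter fun g => cfb g f).card).card :=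
          card_filter_or _ _ D
    _ ≤ _ := by omega

/-- The key swap step: if some class has a conflict, the potential can be decreased. -/
lemma improve {n K s : ℕ} {D : Multiset (Sym2 V)}
    (hdeg : ∀ e ∈ D, (D.filter fun f => cfb e f).card ≤ K)
    (hsK : s ≤ K) (hnK : 2 * K ≤ n)
    (M : Fin n → Multiset (Sym2 V)) (hsum : ∑ i, M i = D)
    (hcard : ∀ i, (M i).card = s)
    (hΦ : ∑ i, (M i).card < ∑ i, cN (M i)) :
    ∃ M' : Fin n → Multiset (Sym2 V), (∑ i, M' i) = D ∧ (∀ i, (M' i).card = s) ∧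
      ∑ i, cN (M' i) < ∑ i, cN (M i) := by
  classical
  -- a conflicted class
  have hex : ∃ i, (M i).card < cN (M i) := by
    by_contra hc
    push_neg at hc
    exact absurd (Finset.sum_le_sum fun i _ => hc i) (not_le.2 hΦ)
  obtain ⟨i, hi⟩ := hex
  obtain ⟨e, he, hce⟩ := exists_conflict_of_card_lt_cN hi
  set R := (M i).erase e with hR
  have hMleD : ∀ j, M j ≤ D := by
    intro j
    rw [← hsum]
    exact Finset.single_le_sum (f := M) (fun k _ => Multiset.zero_le _) (Finset.mem_univ j)
  have heD : e ∈ D := Multiset.mem_of_le (hMleD i) he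
  have hs1 : 1 ≤ s := by
    rw [← hcard i]
    exact Multiset.card_pos_iff_exists_mem.2 ⟨e, he⟩
  have hcardR : R.card = s - 1 := by
    rw [hR, Multiset.card_erase_of_mem he, hcard i]
    rfl
  have hconsR : e ::ₘ R = M i := Multiset.cons_erase he
  -- bad sets
  set badE : Sym2 V → Prop := fun f => 0 < (R.filter fun g => cfb g f).card with hbadE
  set Bad1 : Finset (Fin n) :=
    (Finset.univ.erase i).filter (fun j => 0 < ((M j).filter fun f => cfb e f).card) with hBad1
  set Bad2 : Finset (Fin n) :=
    (Finset.univ.erase i).filter (fun j => ((M j).filter badE).card = s) with hBad2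
  -- generic: split the count of a filtered D over the classes
  have card_sum_fin : ∀ (s : Finset (Fin n)) (g : Fin n → Multiset (Sym2 V)),
      Multiset.card (∑ j ∈ s, g j) = ∑ j ∈ s, Multiset.card (g j) := by
    intro s g
    induction s using Finset.cons_induction with
    | empty => simp
    | cons a t ha ih => rw [Finset.sum_cons, Finset.sum_cons, Multiset.card_add, ih]
  have hsplit : ∀ (p : Sym2 V → Prop) [DecidablePred p],
      ((M i).filter p).card + ∑ j ∈ Finset.univ.erase i, ((M j).filter p).card
      = (D.filter p).card := by
    intro p hp
    rw [← hsum, filter_sum_fin]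
    rw [card_sum_fin Finset.univ fun j => (M j).filter p]
    exact Finset.add_sum_erase _ (fun j => ((M j).filter p).card) (Finset.mem_univ i)
  -- counting Bad1
  have hBad1card : Bad1.card + 2 ≤ K := by
    have h1 : ((M i).filter fun f => cfb e f).card
        = (R.filter fun g => cfb e g).card + 1 := by
      conv_lhs => rw [← hconsR]
      rw [Multiset.filter_cons, if_pos (cfb_self e)]
      simp [add_comm]
    have h2 : Bad1.card ≤ ∑ j ∈ Finset.univ.erase i, ((M j).filter fun f => cfb e f).card := by
      calc Bad1.card = ∑ j ∈ Bad1, 1 := by simp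
      _ ≤ ∑ j ∈ Bad1, ((M j).filter fun f => cfb e f).card := by
          refine Finset.sum_le_sum fun j hj => ?_
          exact (Finset.mem_filter.1 hj).2
      _ ≤ _ := Finset.sum_le_sum_of_subset (Finset.filter_subset _ _)
    have h3 := hsplit (fun f => cfb e f = true)
    have h4 := hdeg e heD
    omega
  -- counting Bad2
  have hBad2card : Bad2.card + 2 ≤ K := by
    have htot : (D.filter badE).card ≤ (s - 1) * K := by
      calc (D.filter badE).card
          ≤ (R.map fun g => (D.filter fun f => cfb g f).card).sum :=
            card_filter_exists_le D R
      _ ≤ (R.map fun _ => K).sum := by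
            refine Multiset.sum_map_le_sum_map _ _ fun g hg => ?_
            exact hdeg g (Multiset.mem_of_le (le_trans (Multiset.erase_le e (M i)) (hMleD i)) hg)
      _ = R.card * K := by simp [Multiset.map_const', Multiset.sum_replicate, smul_eq_mul]
      _ = (s - 1) * K := by rw [hcardR]
    have hMi : ((M i).filter badE).card = s := by
      rw [Multiset.filter_eq_self.2, hcard i]
      intro f hf
      rw [← hconsR] at hf
      rcases Multiset.mem_cons.1 hf with rfl | hfR
      · -- badE e : the conflict witness
        obtain ⟨g, hg⟩ := Multiset.card_pos_iff_exists_mem.1 hce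
        have hg' := Multiset.mem_filter.1 hg
        refine Multiset.card_pos_iff_exists_mem.2 ⟨g, Multiset.mem_filter.2 ⟨hg'.1, ?_⟩⟩
        rw [cfb_comm]; exact hg'.2
      · exact Multiset.card_pos_iff_exists_mem.2
          ⟨f, Multiset.mem_filter.2 ⟨hfR, cfb_self f⟩⟩
    have h2 : s * Bad2.card ≤ ∑ j ∈ Finset.univ.erase i, ((M j).filter badE).card := by
      calc s * Bad2.card = ∑ j ∈ Bad2, s := by rw [Finset.sum_const, smul_eq_mul, mul_comm]
      _ = ∑ j ∈ Bad2, ((M j).filter badE).card := by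
          refine Finset.sum_congr rfl fun j hj => ?_
          exact ((Finset.mem_filter.1 hj).2).symm
      _ ≤ _ := Finset.sum_le_sum_of_subset (Finset.filter_subset _ _)
    have h3 := hsplit badE
    -- s * Bad2.card + s ≤ (s-1) * K = s*K - K
    have h5 : (s - 1) * K + K = s * K := by
      have : s - 1 + 1 = s := by omega
      calc (s-1)*K + K = ((s-1)+1)*K := by ring
      _ = s * K := by rw [this]
    have h6 : s * Bad2.card + s + K ≤ s * K := by omega
    have h7 : s * (Bad2.card + 2) ≤ s * K := by
      have : s * (Bad2.card + 2) = s * Bad2.card + s + s := by ring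
      omega
    exact Nat.le_of_mul_le_mul_left h7 (by omega)
  -- find a good class j
  have hgood : ∃ j, j ≠ i ∧ j ∉ Bad1 ∧ j ∉ Bad2 := by
    by_contra hc
    push_neg at hc
    have hsub : (Finset.univ : Finset (Fin n)) ⊆ insert i (Bad1 ∪ Bad2) := by
      intro j _
      by_cases hji : j = i
      · exact Finset.mem_insert.2 (Or.inl hji)
      · by_cases h1 : j ∈ Bad1
        · exact Finset.mem_insert.2 (Or.inr (Finset.mem_union.2 (Or.inl h1)))
        · exact Finset.mem_insert.2 (Or.inr (Finset.mem_union.2 (Or.inr (hc j hji h1))))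
    have h1 : (Finset.univ : Finset (Fin n)).card ≤ (insert i (Bad1 ∪ Bad2)).card :=
      Finset.card_le_card hsub
    have h2 : (insert i (Bad1 ∪ Bad2)).card ≤ 1 + (Bad1.card + Bad2.card) := by
      calc (insert i (Bad1 ∪ Bad2)).card ≤ (Bad1 ∪ Bad2).card + 1 :=
        Finset.card_insert_le _ _
      _ ≤ 1 + (Bad1.card + Bad2.card) := by
        have := Finset.card_union_le Bad1 Bad2
        omega
    rw [Finset.card_univ, Fintype.card_fin] at h1
    omega
  obtain ⟨j, hji, hjB1, hjB2⟩ := hgood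
  have hjei : j ∈ Finset.univ.erase i := Finset.mem_erase.2 ⟨hji, Finset.mem_univ j⟩
  -- no edge of M j conflicts with e
  have hnoe : ∀ f ∈ M j, cfb e f = false := by
    intro f hf
    by_contra hc
    have hc' : cfb e f = true := by
      cases h : cfb e f
      · exact absurd h hc
      · rfl
    refine hjB1 (Finset.mem_filter.2 ⟨hjei, ?_⟩)
    exact Multiset.card_pos_iff_exists_mem.2 ⟨f, Multiset.mem_filter.2 ⟨hf, hc'⟩⟩
  -- some edge f of M j has no conflict with R
  have hexf : ∃ f ∈ M j, ∀ g ∈ R, cfb g f = false := by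
    have hne : ((M j).filter badE).card ≠ s := fun h =>
      hjB2 (Finset.mem_filter.2 ⟨hjei, h⟩)
    have hlt : ((M j).filter badE).card < s := by
      have hle2 : ((M j).filter badE).card ≤ (M j).card :=
        Multiset.card_le_card (Multiset.filter_le _ _)
      rw [hcard j] at hle2
      omega
    -- so some f in M j is not badE
    by_contra hc
    push_neg at hc
    have : ∀ f ∈ M j, badE f := by
      intro f hf
      obtain ⟨g, hg, hgf⟩ := hc f hf
      have : cfb g f = true := by
        cases h : cfb g f
        · exact absurd h (by simpa [h] using hgf)
        · rfl
      exact Multiset.card_pos_iff_exists_mem.2 ⟨g, Multiset.mem_filter.2 ⟨hg, this⟩⟩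
    rw [Multiset.filter_eq_self.2 this, hcard j] at hne
    exact hne rfl
  obtain ⟨f, hfj, hfR⟩ := hexf
  set Ej := (M j).erase f with hEj
  have hconsEj : f ::ₘ Ej = M j := Multiset.cons_erase hfj
  -- the new partition
  set M' : Fin n → Multiset (Sym2 V) :=
    fun k => if k = i then f ::ₘ R else if k = j then e ::ₘ Ej else M k with hM'
  have hM'i : M' i = f ::ₘ R := by simp [hM']
  have hM'j : M' j = e ::ₘ Ej := by simp [hM', hji]
  have hM'k : ∀ k, k ≠ i → k ≠ j → M' k = M k := by
    intro k h1 h2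
    simp [hM', h1, h2]
  have hji' : j ∈ (Finset.univ.erase i) := hjei
  -- decomposition of sums over univ
  have hdecomp : ∀ (g : Fin n → ℕ),
      ∑ k, g k = g i + g j + ∑ k ∈ (Finset.univ.erase i).erase j, g k := by
    intro g
    rw [← Finset.add_sum_erase _ g (Finset.mem_univ i), ← Finset.add_sum_erase _ g hji']
    ring
  have hdecompM : ∀ (g : Fin n → Multiset (Sym2 V)),
      ∑ k, g k = g i + g j + ∑ k ∈ (Finset.univ.erase i).erase j, g k := by
    intro g
    rw [← Finset.add_sum_erase _ g (Finset.mem_univ i), ← Finset.add_sum_erase _ g hji']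
    rw [add_assoc]
  have hrest : ∀ (h : Fin n → Multiset (Sym2 V)) (h' : Fin n → Multiset (Sym2 V)),
      (∀ k, k ≠ i → k ≠ j → h k = h' k) →
      ∑ k ∈ (Finset.univ.erase i).erase j, h k = ∑ k ∈ (Finset.univ.erase i).erase j, h' k := by
    intro h h' hh
    refine Finset.sum_congr rfl fun k hk => ?_
    have hk1 := Finset.mem_erase.1 hk
    have hk2 := Finset.mem_erase.1 hk1.2
    exact hh k hk2.1 hk1.1
  -- new sum equals D
  have hsum' : ∑ k, M' k = D := by
    rw [hdecompM M', hM'i, hM'j, hrest M' M hM'k, ← hsum, hdecompM M, ← hconsR, ← hconsEj]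
    have : (f ::ₘ R) + (e ::ₘ Ej) = (e ::ₘ R) + (f ::ₘ Ej) := by
      rw [← Multiset.singleton_add, ← Multiset.singleton_add,
          ← Multiset.singleton_add, ← Multiset.singleton_add]
      abel
    rw [this]
  -- cards
  have hcard' : ∀ k, (M' k).card = s := by
    intro k
    by_cases h1 : k = i
    · rw [h1, hM'i, Multiset.card_cons, hcardR]
      omega
    by_cases h2 : k = j
    · rw [h2, hM'j, Multiset.card_cons, hEj, Multiset.card_erase_of_mem hfj, hcard j]
      rw [Nat.pred_eq_sub_one]
      have : 1 ≤ s := hs1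
      omega
    · rw [hM'k k h1 h2]; exact hcard k
  -- potential decrease
  have hpot : ∑ k, cN (M' k) < ∑ k, cN (M k) := by
    rw [hdecomp (fun k => cN (M' k)), hdecomp (fun k => cN (M k))]
    have hrest2 : ∑ k ∈ (Finset.univ.erase i).erase j, cN (M' k)
        = ∑ k ∈ (Finset.univ.erase i).erase j, cN (M k) := by
      refine Finset.sum_congr rfl fun k hk => ?_
      have hk1 := Finset.mem_erase.1 hk
      have hk2 := Finset.mem_erase.1 hk1.2
      rw [hM'k k hk2.1 hk1.1]
    rw [hrest2]
    have h1 : cN (M' i) = cN R + 1 := by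
      rw [hM'i, cN_cons]
      have : (R.filter fun g => cfb f g).card = 0 := by
        rw [Multiset.card_eq_zero, Multiset.filter_eq_nil]
        intro g hg
        rw [cfb_comm]
        simp [hfR g hg]
      rw [this]
    have h2 : cN R + 3 ≤ cN (M i) := by
      rw [← hconsR, cN_cons]
      omega
    have h3 : cN (M' j) = cN Ej + 1 := by
      rw [hM'j, cN_cons]
      have : (Ej.filter fun g => cfb e g).card = 0 := by
        rw [Multiset.card_eq_zero, Multiset.filter_eq_nil]
        intro g hg
        simp [hnoe g (Multiset.mem_of_mem_erase hg)]
      rw [this]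
    have h4 : cN Ej + 1 ≤ cN (M j) := by
      rw [← hconsEj, cN_cons]
      omega
    omega
  exact ⟨M', hsum', hcard', hpot⟩

/-- Iterating `improve` until all classes are conflict-free. -/
lemma resolve {n K s : ℕ} {D : Multiset (Sym2 V)}
    (hdeg : ∀ e ∈ D, (D.filter fun f => cfb e f).card ≤ K)
    (hsK : s ≤ K) (hnK : 2 * K ≤ n) :
    ∀ (N : ℕ) (M : Fin n → Multiset (Sym2 V)), (∑ i, M i) = D →
      (∀ i, (M i).card = s) → (∑ i, cN (M i)) ≤ N →
      ∃ M' : Fin n → Multiset (Sym2 V), (∑ i, M' i) = D ∧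
        ∀ i, (M' i).card = s ∧ (M' i).Pairwise fun e f => ∀ w ∈ e, w ∉ f := by
  intro N
  induction N with
  | zero =>
    intro M hsum hcard hN
    refine ⟨M, hsum, fun i => ⟨hcard i, ?_⟩⟩
    have h1 : cN (M i) = 0 := by
      have : cN (M i) ≤ ∑ k, cN (M k) :=
        Finset.single_le_sum (f := fun k => cN (M k)) (fun k _ => Nat.zero_le _) (Finset.mem_univ i)
      omega
    have h2 := card_le_cN (M i)
    exact pairwise_of_cN_eq (by omega)
  | succ N ih =>
    intro M hsum hcard hN
    by_cases hconf : ∑ i, (M i).card < ∑ i, cN (M i)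
    · obtain ⟨M', hsum', hcard', hpot⟩ := improve hdeg hsK hnK M hsum hcard hconf
      exact ih M' hsum' hcard' (by omega)
    · push_neg at hconf
      have hpt : ∀ i, cN (M i) = (M i).card := by
        by_contra hc
        push_neg at hc
        obtain ⟨i, hi⟩ := hc
        have hlt : (M i).card < cN (M i) := lt_of_le_of_ne (card_le_cN _) (Ne.symm hi)
        have : ∑ k, (M k).card < ∑ k, cN (M k) :=
          Finset.sum_lt_sum (fun k _ => card_le_cN _) ⟨i, Finset.mem_univ i, hlt⟩
        omega
      exact ⟨M, hsum, fun i => ⟨hcard i, pairwise_of_cN_eq (hpt i)⟩⟩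

/-- Counting edges via degrees on one side. -/
lemma degree_sum_eq_card (A B : Finset V) (hAB : Disjoint A B) :
    ∀ (D : Multiset (Sym2 V)), (∀ e ∈ D, ∃ p ∈ A, ∃ q ∈ B, e = s(p, q)) →
      (∑ x ∈ A, demandDegree D x) = D.card := by
  intro D
  induction D using Multiset.induction_on with
  | empty => simp [demandDegree]
  | cons e t ih =>
    intro hD
    obtain ⟨p, hp, q, hq, rfl⟩ := hD e (Multiset.mem_cons_self e t)
    have ht := ih fun f hf => hD f (Multiset.mem_cons_of_mem hf)
    have hterm : ∀ x, demandDegree (s(p,q) ::ₘ t) x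
        = demandDegree t x + (if x ∈ s(p,q) then 1 else 0) := by
      intro x
      unfold demandDegree
      rw [Multiset.filter_cons]
      split_ifs <;> simp [add_comm]
    have : (∑ x ∈ A, demandDegree (s(p,q) ::ₘ t) x)
        = (∑ x ∈ A, demandDegree t x) + ∑ x ∈ A, (if x ∈ s(p,q) then 1 else 0) := by
      rw [← Finset.sum_add_distrib]
      exact Finset.sum_congr rfl fun x _ => hterm x
    rw [this, ht, Multiset.card_cons]
    have hone : (∑ x ∈ A, (if x ∈ s(p,q) then 1 else 0)) = 1 := by
      have hqA : q ∉ A := fun hqa => (Finset.disjoint_left.1 hAB hqa) hq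
      have : ∀ x ∈ A, (if x ∈ s(p,q) then 1 else 0) = (if x = p then 1 else 0) := by
        intro x hx
        by_cases hxp : x = p
        · simp [hxp, Sym2.mem_iff]
        · have : x ∉ s(p,q) := by
            rw [Sym2.mem_iff]
            rintro (rfl | rfl)
            · exact hxp rfl
            · exact hqA hx
          simp [hxp, this]
      rw [Finset.sum_congr rfl this, Finset.sum_ite_eq' A p (fun _ => 1)]
      simp [hp]
    omega


end AuxiliaryLemmas

/-- the matching-splitting claim in the proof of Theorem 2:
if `D` is a semiregular bipartite demand graph on `(A, B)` with `|A| ≥ |B|`,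
all degrees in `A` equal to `ΔA`, all degrees in `B` equal to `ΔB`, and
`ΔA ≤ |B| / 4`, then the demand edges of `D` can be partitioned into `|A|`
matchings, each of size `ΔA`. -/
theorem matching_partition [DecidableEq V] (A B : Finset V)
    (hAB : Disjoint A B) (hba : B.card ≤ A.card)
    (D : Multiset (Sym2 V)) (hD : IsBipartiteDemand A B D)
    (ΔA ΔB : ℕ)
    (hdA : ∀ x ∈ A, demandDegree D x = ΔA)
    (hdB : ∀ y ∈ B, demandDegree D y = ΔB)
    (hΔ : (ΔA : ℝ) ≤ (B.card : ℝ) / 4) :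
    ∃ M : Fin A.card → Multiset (Sym2 V),
      (∑ i, M i) = D ∧
      ∀ i, (M i).card = ΔA ∧
        (M i).Pairwise fun e f => ∀ w ∈ e, w ∉ f := by
  -- basic arithmetic from the hypothesis
  have h4A : 4 * ΔA ≤ B.card := by
    rw [le_div_iff₀ (by norm_num : (0:ℝ) < 4)] at hΔ
    have : ((4 * ΔA : ℕ) : ℝ) ≤ (B.card : ℝ) := by push_cast; linarith
    exact_mod_cast this
  -- degenerate case
  by_cases h0 : ΔA = 0
  · have hD0 : D = 0 := by
      by_contra hne
      obtain ⟨e, he⟩ := Multiset.exists_mem_of_ne_zero hne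
      obtain ⟨p, hp, q, hq, rfl⟩ := hD e he
      have : 1 ≤ demandDegree D p := by
        unfold demandDegree
        refine Multiset.card_pos_iff_exists_mem.2 ⟨s(p,q), Multiset.mem_filter.2 ⟨he, ?_⟩⟩
        simp [Sym2.mem_iff]
      rw [hdA p hp, h0] at this
      omega
    refine ⟨fun _ => 0, ?_, fun i => ⟨by simp [h0], by simpa using Multiset.pairwise_zero _⟩⟩
    simp [hD0]
  -- main case
  have hA1 : 1 ≤ ΔA := by omega
  have hb1 : 1 ≤ B.card := by omega
  have hcardA : A.card * ΔA = D.card := by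
    rw [← degree_sum_eq_card A B hAB D hD]
    rw [Finset.sum_congr rfl hdA, Finset.sum_const, smul_eq_mul]
  have hcardB : B.card * ΔB = D.card := by
    have hD' : ∀ e ∈ D, ∃ p ∈ B, ∃ q ∈ A, e = s(p, q) := by
      intro e he
      obtain ⟨p, hp, q, hq, rfl⟩ := hD e he
      exact ⟨q, hq, p, hp, Sym2.eq_swap⟩
    rw [← degree_sum_eq_card B A hAB.symm D hD']
    rw [Finset.sum_congr rfl hdB, Finset.sum_const, smul_eq_mul]
  have hAB' : ΔA ≤ ΔB := by
    have h1 : B.card * ΔA ≤ B.card * ΔB := by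
      rw [hcardB, ← hcardA]
      exact Nat.mul_le_mul_right ΔA hba
    exact Nat.le_of_mul_le_mul_left h1 (by omega)
  have h4B : 4 * ΔB ≤ A.card := by
    have h1 : B.card * (4 * ΔB) ≤ B.card * A.card := by
      calc B.card * (4 * ΔB) = 4 * (B.card * ΔB) := by ring
      _ = 4 * (A.card * ΔA) := by rw [hcardB, hcardA]
      _ = A.card * (4 * ΔA) := by ring
      _ ≤ A.card * B.card := Nat.mul_le_mul_left A.card h4A
      _ = B.card * A.card := by ring
    exact Nat.le_of_mul_le_mul_left h1 (by omega)
  -- conflict degree bound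
  set K := ΔA + ΔB with hK
  have hdeg : ∀ e ∈ D, (D.filter fun f => cfb e f).card ≤ K := by
    intro e he
    obtain ⟨p, hp, q, hq, rfl⟩ := hD e he
    have hcong : (D.filter fun f => cfb s(p,q) f)
        = D.filter fun f => (p ∈ f) ∨ (q ∈ f) := by
      apply Multiset.filter_congr
      intro f _
      rw [show (cfb s(p,q) f = true) ↔ (∃ w ∈ s(p,q), w ∈ f) from cfb_iff _ _]
      constructor
      · rintro ⟨w, hw, hwf⟩
        rcases Sym2.mem_iff.1 hw with rfl | rfl
        · exact Or.inl hwf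
        · exact Or.inr hwf
      · rintro (h | h)
        · exact ⟨p, by simp [Sym2.mem_iff], h⟩
        · exact ⟨q, by simp [Sym2.mem_iff], h⟩
    rw [hcong]
    calc (D.filter fun f => (p ∈ f) ∨ (q ∈ f)).card
        ≤ (D.filter fun f => p ∈ f).card + (D.filter fun f => q ∈ f).card :=
          card_filter_or _ _ D
    _ = demandDegree D p + demandDegree D q := rfl
    _ = ΔA + ΔB := by rw [hdA p hp, hdB q hq]
  -- initial partition and resolution
  obtain ⟨M, hsum, hcard⟩ := exists_partition ΔA A.card D hcardA.symm
  exact resolve hdeg (by omega) (by omega) (∑ i, cN (M i)) M hsum hcard le_rfl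
end
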